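/- arXiv:2303.04239 — 8 statements merged into one kernel-verified Lean document; each statement's English description precedes it below -/
import Mathlib

section
/- Let P be a Markov transition kernel on (X, 𝓑) and suppose a measurable function V : X → [1, ∞) satisfies the Lyapunov–Foster drift condition PV(x) ≤ λ V(x) + b·1_C(x) for all x ∈ X, where 0 < λ < 1, b < ∞, and C ∈ 𝓑. Then for every r ∈ (1, 1/λ) and every x ∈ X, (𝔼_x[r^{τ_C}] − 1)/(r − 1) ≤ 𝔼_x[Σ_{k=0}^{τ_C − 1} V(Φ^k) r^k] ≤ ((1 + rb)/(1 − λ r)) V(x), where the middle and left expressions are interpreted in [0, ∞] (with r^{τ_C} = ∞ when τ_C = ∞). -/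
/-!
Statement 2 (Theorem 15.2.5 of Meyn–Tweedie): under the Lyapunov–Foster drift condition
`PV ≤ λ V + b 1_C`, for every `r ∈ (1, 1/λ)` and every `x`,
`(𝔼_x[r^{τ_C}] - 1)/(r - 1) ≤ 𝔼_x[Σ_{k=0}^{τ_C - 1} V(Φ^k) r^k] ≤ ((1 + r b)/(1 - λ r)) V(x)`,
all quantities valued in `[0,∞]`.

The law-of-the-chain quantities are expressed through the standard kernel recursions:
* `tauEqProb P B n x = ℙ_x {τ_B = n}` (probability that the first hitting time of `B` is `n`),
* `expRtau P B r x = 𝔼_x[r^{τ_B}]` (with `r^∞ = ∞` when `τ_B = ∞`),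
* `tabooExp P B V k x = 𝔼_x[V(Φ^k) 1{τ_B > k}] = 𝔼_x[V(Φ^k) 1{Φ^1,…,Φ^k ∉ B}]`, so that
  `∑' k, r^k * tabooExp P B V k x = 𝔼_x[Σ_{k=0}^{τ_B - 1} V(Φ^k) r^k]`.
-/

open MeasureTheory ProbabilityTheory ENNReal

/-- `ℙ_x {τ_B = n}` for the chain with transition kernel `P`:
`ℙ_x {τ_B = 1} = P(x,B)` and `ℙ_x {τ_B = n+1} = ∫_{Bᶜ} P(x,dy) ℙ_y {τ_B = n}`. -/
noncomputable def tauEqProb {X : Type*} [MeasurableSpace X] (P : Kernel X X) (B : Set X) :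
    ℕ → X → ℝ≥0∞
  | 0, _ => 0
  | 1, x => P x B
  | n + 2, x => ∫⁻ y in Bᶜ, tauEqProb P B (n + 1) y ∂(P x)

/-- `𝔼_x[r^{τ_B}] ∈ [0,∞]`, where `r^{τ_B} = ∞` on the event `{τ_B = ∞}`. -/
noncomputable def expRtau {X : Type*} [MeasurableSpace X] (P : Kernel X X) (B : Set X)
    (r : ℝ≥0∞) (x : X) : ℝ≥0∞ :=
  (∑' n : ℕ, r ^ n * tauEqProb P B n x) + ∞ * (1 - ∑' n : ℕ, tauEqProb P B n x)

/-- `𝔼_x[V(Φ^k) 1{Φ^1, …, Φ^k ∉ B}]`, i.e. the expectation of `V(Φ^k)` on `{τ_B > k}`. -/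
noncomputable def tabooExp {X : Type*} [MeasurableSpace X] (P : Kernel X X) (B : Set X)
    (V : X → ℝ≥0∞) : ℕ → X → ℝ≥0∞
  | 0, x => V x
  | k + 1, x => ∫⁻ y in Bᶜ, tabooExp P B V k y ∂(P x)

section Aux

variable {X : Type*} [MeasurableSpace X] (P : Kernel X X) [IsMarkovKernel P]
  {C : Set X}

lemma tabooExp_measurable (hC : MeasurableSet C) {V : X → ℝ≥0∞} (hV : Measurable V) :
    ∀ k, Measurable (tabooExp P C V k) := by
  intro k
  induction k with
  | zero => exact hV
  | succ k ih => exact ih.setLIntegral_kernel hC.compl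

lemma tauEqProb_measurable (hC : MeasurableSet C) :
    ∀ n, Measurable (tauEqProb P C n)
  | 0 => measurable_const
  | 1 => P.measurable_coe hC
  | (n + 2) => (tauEqProb_measurable hC (n + 1)).setLIntegral_kernel hC.compl

lemma tabooExp_mono {V W : X → ℝ≥0∞} (h : ∀ x, V x ≤ W x) (k : ℕ) (x : X) :
    tabooExp P C V k x ≤ tabooExp P C W k x := by
  induction k generalizing x with
  | zero => exact h x
  | succ k ih => exact lintegral_mono fun y => ih y

/-- The key identity: `ℙ_x{τ_C > k} + ℙ_x{τ_C ≤ k} = 1`, where `ℙ_x{τ_C > k}` is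
`tabooExp` of the constant function `1`. -/
lemma tabooExp_one_add_sum (hC : MeasurableSet C) :
    ∀ k x, tabooExp P C (fun _ => 1) k x
      + ∑ n ∈ Finset.range (k + 1), tauEqProb P C n x = 1 := by
  intro k
  induction k with
  | zero =>
    intro x
    simp [tabooExp, tauEqProb]
  | succ k ih =>
    intro x
    have hmeasT : Measurable (tabooExp P C (fun _ => 1) k) :=
      tabooExp_measurable P hC measurable_const k
    have hmeasS : Measurable fun y => ∑ n ∈ Finset.range k, tauEqProb P C (n + 1) y :=
      Finset.measurable_sum _ fun n _ => tauEqProb_measurable P hC (n + 1)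
    have hsum : ∑ n ∈ Finset.range (k + 2), tauEqProb P C n x
        = tauEqProb P C 1 x + ∑ n ∈ Finset.range k, tauEqProb P C (n + 2) x := by
      rw [Finset.sum_range_succ' _ (k + 1), Finset.sum_range_succ' _ k]
      simp [tauEqProb, add_comm, add_assoc, add_left_comm]
    have hsum2 : ∑ n ∈ Finset.range k, tauEqProb P C (n + 2) x
        = ∫⁻ y in Cᶜ, ∑ n ∈ Finset.range k, tauEqProb P C (n + 1) y ∂(P x) := by
      rw [lintegral_finset_sum _ fun n _ => tauEqProb_measurable P hC (n + 1)]
      rfl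
    have ihy : ∀ y, tabooExp P C (fun _ => 1) k y
        + ∑ n ∈ Finset.range k, tauEqProb P C (n + 1) y = 1 := by
      intro y
      have := ih y
      rwa [Finset.sum_range_succ' _ k, show tauEqProb P C 0 y = 0 from rfl, add_zero] at this
    calc tabooExp P C (fun _ => 1) (k + 1) x + ∑ n ∈ Finset.range (k + 2), tauEqProb P C n x
        = (∫⁻ y in Cᶜ, tabooExp P C (fun _ => 1) k y ∂(P x))
            + (∫⁻ y in Cᶜ, ∑ n ∈ Finset.range k, tauEqProb P C (n + 1) y ∂(P x))
            + tauEqProb P C 1 x := by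
          rw [hsum, hsum2, show tabooExp P C (fun _ => 1) (k + 1) x
            = ∫⁻ y in Cᶜ, tabooExp P C (fun _ => 1) k y ∂(P x) from rfl]
          ring
      _ = (∫⁻ y in Cᶜ, (tabooExp P C (fun _ => 1) k y
            + ∑ n ∈ Finset.range k, tauEqProb P C (n + 1) y) ∂(P x)) + P x C := by
          rw [lintegral_add_left hmeasT]; rfl
      _ = P x Cᶜ + P x C := by
          simp only [ihy]
          rw [setLIntegral_one]
      _ = 1 := by
          have h2 := measure_add_measure_compl (μ := P x) hC.compl
          rw [compl_compl] at h2
          rw [h2, measure_univ]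

lemma sum_tauEqProb_le_one (hC : MeasurableSet C) (k : ℕ) (x : X) :
    ∑ n ∈ Finset.range (k + 1), tauEqProb P C n x ≤ 1 :=
  le_add_self.trans_eq (tabooExp_one_add_sum P hC k x)

variable {V : X → ℝ≥0∞} {lam b : ℝ≥0∞}

lemma taboo_step_off (hC : MeasurableSet C) (hV : Measurable V)
    (hdrift : ∀ x, ∫⁻ y, V y ∂(P x) ≤ lam * V x + b * C.indicator 1 x) :
    ∀ k, ∀ y ∉ C, tabooExp P C V (k + 1) y ≤ lam * tabooExp P C V k y := by
  intro k
  induction k with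
  | zero =>
    intro y hy
    have h := hdrift y
    rw [Set.indicator_of_notMem hy, mul_zero, add_zero] at h
    exact (setLIntegral_le_lintegral _ _).trans h
  | succ k ih =>
    intro y _
    calc tabooExp P C V (k + 2) y = ∫⁻ z in Cᶜ, tabooExp P C V (k + 1) z ∂(P y) := rfl
      _ ≤ ∫⁻ z in Cᶜ, lam * tabooExp P C V k z ∂(P y) :=
          setLIntegral_mono ((tabooExp_measurable P hC hV k).const_mul lam)
            fun z hz => ih z hz
      _ = lam * tabooExp P C V (k + 1) y :=
          lintegral_const_mul lam (tabooExp_measurable P hC hV k)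

lemma taboo_drift (hC : MeasurableSet C) (hV : Measurable V)
    (hdrift : ∀ x, ∫⁻ y, V y ∂(P x) ≤ lam * V x + b * C.indicator 1 x) :
    ∀ k x, tabooExp P C V (k + 1) x ≤ lam ^ k * (lam * V x + b) := by
  intro k
  induction k with
  | zero =>
    intro x
    have h := hdrift x
    have hle : tabooExp P C V 1 x ≤ lam * V x + b * C.indicator 1 x :=
      (setLIntegral_le_lintegral _ _).trans h
    refine hle.trans ?_
    rw [pow_zero, one_mul]
    gcongr
    calc b * C.indicator 1 x ≤ b * 1 := by
          gcongr
          exact Set.indicator_le_self' (fun _ _ => zero_le_one) x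
      _ = b := mul_one b
  | succ k ih =>
    intro x
    calc tabooExp P C V (k + 2) x = ∫⁻ z in Cᶜ, tabooExp P C V (k + 1) z ∂(P x) := rfl
      _ ≤ ∫⁻ z in Cᶜ, lam * tabooExp P C V k z ∂(P x) :=
          setLIntegral_mono ((tabooExp_measurable P hC hV k).const_mul lam)
            fun z hz => taboo_step_off P hC hV hdrift k z hz
      _ = lam * tabooExp P C V (k + 1) x :=
          lintegral_const_mul lam (tabooExp_measurable P hC hV k)
      _ ≤ lam * (lam ^ k * (lam * V x + b)) := mul_le_mul_right (ih x) lam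
      _ = lam ^ (k + 1) * (lam * V x + b) := by rw [pow_succ]; ring

end Aux

theorem drift_condition_return_time_bound
    {X : Type*} [MeasurableSpace X] (P : Kernel X X) [IsMarkovKernel P]
    (V : X → ℝ≥0∞) (hVmeas : Measurable V) (hV1 : ∀ x, 1 ≤ V x) (hVfin : ∀ x, V x ≠ ∞)
    (C : Set X) (hC : MeasurableSet C)
    (lam b : ℝ≥0∞) (hlam0 : 0 < lam) (hlam1 : lam < 1) (hb : b ≠ ∞)
    (hdrift : ∀ x, ∫⁻ y, V y ∂(P x) ≤ lam * V x + b * C.indicator 1 x)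
    (r : ℝ≥0∞) (hr1 : 1 < r) (hrlam : r < lam⁻¹) (x : X) :
    (expRtau P C r x - 1) / (r - 1) ≤ ∑' k : ℕ, r ^ k * tabooExp P C V k x ∧
      ∑' k : ℕ, r ^ k * tabooExp P C V k x ≤ (1 + r * b) / (1 - lam * r) * V x := by
  have hlamtop : lam ≠ ∞ := (hlam1.trans ENNReal.one_lt_top).ne
  have hrtop : r ≠ ∞ := (hrlam.trans (ENNReal.inv_lt_top.mpr hlam0)).ne
  have hlamr1 : lam * r < 1 := by
    calc lam * r < lam * lam⁻¹ := ENNReal.mul_right_strictMono hlam0.ne' hlamtop hrlam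
      _ = 1 := ENNReal.mul_inv_cancel hlam0.ne' hlamtop
  set d : ℝ≥0∞ := 1 - lam * r with hd
  have hd0 : d ≠ 0 := (tsub_pos_iff_lt.mpr hlamr1).ne'
  have hdtop : d ≠ ∞ := (tsub_le_self.trans_lt ENNReal.one_lt_top).ne
  -- Upper bound
  have hub : ∑' k : ℕ, r ^ k * tabooExp P C V k x ≤ (1 + r * b) / d * V x := by
    have hsplit : ∑' k : ℕ, r ^ k * tabooExp P C V k x
        = V x + ∑' k : ℕ, r ^ (k + 1) * tabooExp P C V (k + 1) x := by
      rw [tsum_eq_zero_add' ENNReal.summable, pow_zero, one_mul]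
      rfl
    have hterm : ∀ k : ℕ, r ^ (k + 1) * tabooExp P C V (k + 1) x
        ≤ r * (lam * V x + b) * (r * lam) ^ k := by
      intro k
      calc r ^ (k + 1) * tabooExp P C V (k + 1) x
          ≤ r ^ (k + 1) * (lam ^ k * (lam * V x + b)) :=
            mul_le_mul_right (taboo_drift P hC hVmeas hdrift k x) _
        _ = r * (lam * V x + b) * (r * lam) ^ k := by rw [mul_pow, pow_succ]; ring
    have hgeo : ∑' k : ℕ, r * (lam * V x + b) * (r * lam) ^ k
        = r * (lam * V x + b) * d⁻¹ := by
      rw [ENNReal.tsum_mul_left, ENNReal.tsum_geometric, mul_comm r lam, ← hd]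
    have harith : V x + r * (lam * V x + b) * d⁻¹ ≤ (1 + r * b) / d * V x := by
      have hdiv : (1 + r * b) / d * V x = (1 + r * b) * V x / d := by
        rw [div_eq_mul_inv, div_eq_mul_inv, mul_right_comm]
      rw [hdiv, ENNReal.le_div_iff_mul_le (Or.inl hd0) (Or.inl hdtop), add_mul, mul_assoc,
        ENNReal.inv_mul_cancel hd0 hdtop, mul_one]
      have hVd : V x * d + r * (lam * V x) = V x := by
        rw [show r * (lam * V x) = V x * (lam * r) by ring, ← mul_add, hd,
          tsub_add_cancel_of_le hlamr1.le, mul_one]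
      calc V x * d + r * (lam * V x + b)
          = (V x * d + r * (lam * V x)) + r * b := by ring
        _ = V x + r * b := by rw [hVd]
        _ ≤ V x + r * b * V x := add_le_add_right (le_mul_of_one_le_right' (hV1 x)) _
        _ = (1 + r * b) * V x := by ring
    calc ∑' k : ℕ, r ^ k * tabooExp P C V k x
        = V x + ∑' k : ℕ, r ^ (k + 1) * tabooExp P C V (k + 1) x := hsplit
      _ ≤ V x + ∑' k : ℕ, r * (lam * V x + b) * (r * lam) ^ k :=
          add_le_add_right (ENNReal.tsum_le_tsum hterm) _
      _ = V x + r * (lam * V x + b) * d⁻¹ := by rw [hgeo]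
      _ ≤ (1 + r * b) / d * V x := harith
  refine ⟨?_, hub⟩
  -- Lower bound
  set p : ℕ → ℝ≥0∞ := fun n => tauEqProb P C n x with hp
  set T : ℕ → ℝ≥0∞ := fun k => tabooExp P C (fun _ => 1) k x with hT
  have hTW : ∑' k : ℕ, r ^ k * T k ≤ ∑' k : ℕ, r ^ k * tabooExp P C V k x :=
    ENNReal.tsum_le_tsum fun k => mul_le_mul_right (tabooExp_mono P (fun y => hV1 y) k x) _
  have hTF : ∀ k, T k + ∑ n ∈ Finset.range (k + 1), p n = 1 :=
    fun k => tabooExp_one_add_sum P hC k x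
  have hFle : ∀ N, ∑ n ∈ Finset.range N, p n ≤ 1 := by
    intro N
    refine le_trans ?_ (sum_tauEqProb_le_one P hC N x)
    exact Finset.sum_le_sum_of_subset (Finset.range_subset_range.mpr (Nat.le_succ N))
  have hTsub : ∀ k, T k = 1 - ∑ n ∈ Finset.range (k + 1), p n := by
    intro k
    exact ENNReal.eq_sub_of_add_eq ((hFle (k + 1)).trans_lt ENNReal.one_lt_top).ne (hTF k)
  have hq1 : ∑' n, p n ≤ 1 := ENNReal.tsum_le_of_sum_range_le hFle
  rcases eq_or_lt_of_le hq1 with hq | hq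
  · -- τ_C < ∞ almost surely
    set g : ℕ → ℝ≥0∞ := fun m => ∑ k ∈ Finset.range m, r ^ k with hg
    have hgeom : ∀ m, g m * (r - 1) + 1 = r ^ m := by
      intro m
      induction m with
      | zero => simp [hg]
      | succ m ih =>
        have hg1 : g (m + 1) = g m + r ^ m := Finset.sum_range_succ _ m
        calc g (m + 1) * (r - 1) + 1 = g m * (r - 1) + 1 + r ^ m * (r - 1) := by
              rw [hg1]; ring
          _ = r ^ m * 1 + r ^ m * (r - 1) := by rw [ih, mul_one]
          _ = r ^ m * (1 + (r - 1)) := (mul_add _ _ _).symm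
          _ = r ^ m * r := by rw [add_tsub_cancel_of_le hr1.le]
          _ = r ^ (m + 1) := (pow_succ r m).symm
    have hr10 : r - 1 ≠ 0 := (tsub_pos_iff_lt.mpr hr1).ne'
    have hr1top : r - 1 ≠ ∞ := (tsub_le_self.trans_lt (lt_top_iff_ne_top.mpr hrtop)).ne
    have hexp : expRtau P C r x = (r - 1) * ∑' m, g m * p m + 1 := by
      rw [expRtau, ← hp, hq, tsub_self, mul_zero, add_zero]
      calc ∑' n, r ^ n * p n = ∑' n, ((r - 1) * (g n * p n) + p n) := by
            refine tsum_congr fun n => ?_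
            rw [← hgeom n, add_mul, one_mul, mul_comm (g n) (r - 1), mul_assoc]
        _ = (r - 1) * ∑' m, g m * p m + ∑' n, p n := by
            rw [ENNReal.tsum_add, ENNReal.tsum_mul_left]
        _ = (r - 1) * ∑' m, g m * p m + 1 := by rw [hq]
    have hdiv : (expRtau P C r x - 1) / (r - 1) = ∑' m, g m * p m := by
      rw [hexp, ENNReal.add_sub_cancel_right ENNReal.one_ne_top, div_eq_mul_inv,
        mul_comm (r - 1), mul_assoc, ENNReal.mul_inv_cancel hr10 hr1top, mul_one]
    rw [hdiv]
    -- it remains to bound `∑' m, g m * p m` by `∑' k, r ^ k * T k`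
    refine le_trans ?_ hTW
    refine ENNReal.tsum_le_of_sum_range_le fun N => ?_
    have hstep1 : ∀ m ∈ Finset.range N, g m * p m
        = ∑ k ∈ Finset.range N, (if k < m then r ^ k * p m else 0) := by
      intro m hm
      rw [hg, Finset.sum_mul]
      rw [← Finset.sum_subset (Finset.range_subset_range.mpr (Finset.mem_range.mp hm).le)
        (fun k _ hk => if_neg (by simpa using hk))]
      exact Finset.sum_congr rfl fun k hk => (if_pos (Finset.mem_range.mp hk)).symm
    have hstep3 : ∀ k, ∑ m ∈ Finset.range N, (if k < m then r ^ k * p m else 0)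
        = r ^ k * ∑ m ∈ Finset.Ico (k + 1) N, p m := by
      intro k
      rw [Finset.mul_sum]
      rw [← Finset.sum_subset
        (show Finset.Ico (k + 1) N ⊆ Finset.range N by
          rw [Finset.range_eq_Ico]; exact Finset.Ico_subset_Ico (Nat.zero_le _) le_rfl)
        (fun m hm hmn => if_neg (by
          simp only [Finset.mem_Ico, Finset.mem_range] at hm hmn
          omega))]
      exact Finset.sum_congr rfl fun m hm =>
        if_pos (by simp only [Finset.mem_Ico] at hm; omega)
    have hstep4 : ∀ k, ∑ m ∈ Finset.Ico (k + 1) N, p m ≤ T k := by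
      intro k
      by_cases h : k + 1 ≤ N
      · have hcons : ∑ n ∈ Finset.range (k + 1), p n + ∑ m ∈ Finset.Ico (k + 1) N, p m
            = ∑ n ∈ Finset.range N, p n := Finset.sum_range_add_sum_Ico p h
        rw [hTsub k]
        exact ENNReal.le_sub_of_add_le_left
          ((hFle (k + 1)).trans_lt ENNReal.one_lt_top).ne (hcons.le.trans (hFle N))
      · rw [Finset.Ico_eq_empty (by omega), Finset.sum_empty]
        exact zero_le
    calc ∑ m ∈ Finset.range N, g m * p m
        = ∑ m ∈ Finset.range N, ∑ k ∈ Finset.range N, (if k < m then r ^ k * p m else 0) :=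
          Finset.sum_congr rfl hstep1
      _ = ∑ k ∈ Finset.range N, ∑ m ∈ Finset.range N, (if k < m then r ^ k * p m else 0) :=
          Finset.sum_comm
      _ = ∑ k ∈ Finset.range N, r ^ k * ∑ m ∈ Finset.Ico (k + 1) N, p m :=
          Finset.sum_congr rfl fun k _ => hstep3 k
      _ ≤ ∑ k ∈ Finset.range N, r ^ k * T k :=
          Finset.sum_le_sum fun k _ => mul_le_mul_right (hstep4 k) _
      _ ≤ ∑' k : ℕ, r ^ k * T k := ENNReal.sum_le_tsum _
  · -- the (vacuous) case `ℙ_x {τ_C = ∞} > 0`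
    have hTq : ∀ k, 1 - ∑' n, p n ≤ T k := by
      intro k
      rw [hTsub k]
      exact tsub_le_tsub_left (ENNReal.sum_le_tsum _) 1
    have htop : ∑' k : ℕ, r ^ k * T k = ∞ := by
      refine top_le_iff.mp ?_
      have hge : ∑' k : ℕ, r ^ k * (1 - ∑' n, p n) ≤ ∑' k : ℕ, r ^ k * T k :=
        ENNReal.tsum_le_tsum fun k => mul_le_mul_right (hTq k) _
      rw [ENNReal.tsum_mul_right, ENNReal.tsum_geometric, tsub_eq_zero_of_le hr1.le,
        ENNReal.inv_zero] at hge
      refine le_trans ?_ hge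
      rw [ENNReal.top_mul (tsub_pos_iff_lt.mpr hq).ne']
    have : ∑' k : ℕ, r ^ k * tabooExp P C V k x = ∞ :=
      top_le_iff.mp (htop ▸ hTW)
    rw [this]
    exact le_top
end

section
/- Let p be an increment distribution with m_p := Σ_{n≥1} n p(n) < ∞, let u be its zero-delay renewal sequence, and let e be its equilibrium delay distribution. Then for every n ≥ 0, the convolution (e * u)(n) := Σ_{k=0}^{n} e(k) u(n−k) equals 1/m_p. In particular, the renewal sequence with equilibrium delay e is identically constant equal to π(1) := 1/m_p. -/
/-!
Statement 4: if `p` is an increment distribution on `{1,2,…}` with finite mean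
`m_p = Σ_{n≥1} n p(n) < ∞`, `u` is its zero-delay renewal sequence, and `e` its equilibrium
delay distribution `e(n) = (Σ_{j≥n+1} p(j))/m_p`, then the renewal sequence with delay `e`
is identically constant: `(e * u)(n) = Σ_{k=0}^n e(k) u(n-k) = 1/m_p` for every `n ≥ 0`.

The increment distribution is modelled as `p : ℕ → ℝ` with `p 0 = 0`.
-/

open Finset


-- U recursion
lemma aux_U (p u : ℕ → ℝ) (hu0 : u 0 = 1)
    (hu : ∀ n, 1 ≤ n → u n = ∑ k ∈ Finset.Icc 1 n, p k * u (n - k)) (n : ℕ) :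
    ∑ m ∈ range (n + 1), u m
      = 1 + ∑ j ∈ Icc 1 n, p j * ∑ t ∈ range (n - j + 1), u t := by
  have hsplit : range (n + 1) = insert 0 (Icc 1 n) := by
    ext x; simp [Finset.mem_Icc, Finset.mem_range, Finset.mem_insert]; omega
  rw [hsplit, Finset.sum_insert (by simp)]
  have h1 : ∑ m ∈ Icc 1 n, u m = ∑ m ∈ Icc 1 n, ∑ j ∈ Icc 1 m, p j * u (m - j) :=
    Finset.sum_congr rfl (fun m hm => hu m (Finset.mem_Icc.mp hm).1)
  rw [hu0, h1]
  have h2 : ∑ m ∈ Icc 1 n, ∑ j ∈ Icc 1 m, p j * u (m - j)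
      = ∑ j ∈ Icc 1 n, ∑ m ∈ Icc j n, p j * u (m - j) := by
    apply Finset.sum_comm'
    intro m j
    simp only [Finset.mem_Icc]
    omega
  rw [h2]
  congr 1
  apply Finset.sum_congr rfl
  intro j hj
  rw [Finset.mul_sum]
  have hjn : j ≤ n := (Finset.mem_Icc.mp hj).2
  rw [← Finset.Ico_add_one_right_eq_Icc, Finset.sum_Ico_eq_sum_range]
  have hc : n + 1 - j = n - j + 1 := by omega
  rw [hc]
  apply Finset.sum_congr rfl
  intro t _
  have : j + t - j = t := by omega
  rw [this]

lemma key (p u : ℕ → ℝ) (hp0 : p 0 = 0) (hu0 : u 0 = 1)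
    (hu : ∀ n, 1 ≤ n → u n = ∑ k ∈ Finset.Icc 1 n, p k * u (n - k)) (n : ℕ) :
    ∑ k ∈ range (n + 1), (1 - ∑ j ∈ range (k + 1), p j) * u (n - k) = 1 := by
  have hP : ∀ k, ∑ j ∈ range (k + 1), p j = ∑ j ∈ Icc 1 k, p j := by
    intro k
    have : range (k + 1) = insert 0 (Icc 1 k) := by
      ext x; simp [Finset.mem_Icc, Finset.mem_range, Finset.mem_insert]; omega
    rw [this, Finset.sum_insert (by simp), hp0, zero_add]
  simp only [sub_mul, one_mul, Finset.sum_sub_distrib, hP]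
  have hU : ∑ k ∈ range (n + 1), u (n - k) = ∑ m ∈ range (n + 1), u m := by
    have h := Finset.sum_range_reflect u (n + 1)
    simp only [Nat.add_sub_cancel] at h
    exact h
  have h2 : ∑ k ∈ range (n + 1), (∑ j ∈ Icc 1 k, p j) * u (n - k)
      = ∑ j ∈ Icc 1 n, p j * ∑ t ∈ range (n - j + 1), u t := by
    simp only [Finset.sum_mul]
    rw [Finset.sum_comm' (t' := Icc 1 n) (s' := fun j => Icc j n)
      (by intro k j; simp only [Finset.mem_Icc, Finset.mem_range]; omega)]
    apply Finset.sum_congr rfl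
    intro j hj
    rw [Finset.mul_sum]
    have hjn : j ≤ n := (Finset.mem_Icc.mp hj).2
    rw [← Finset.Ico_add_one_right_eq_Icc, Finset.sum_Ico_eq_sum_range]
    have h3 : n + 1 - j = n - j + 1 := by omega
    rw [h3]
    refine Eq.trans ?_ (Finset.sum_range_reflect (fun t => p j * u t) (n - j + 1))
    apply Finset.sum_congr rfl
    intro t _
    have h4 : n - (j + t) = n - j + 1 - 1 - t := by omega
    rw [h4]
  rw [hU, h2, aux_U p u hu0 hu n]
  ring

theorem equilibrium_delay_renewal_constant
    (p : ℕ → ℝ) (hp0 : p 0 = 0) (hpnn : ∀ n, 0 ≤ p n) (hpsum : ∑' n, p n = 1)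
    (hmean : Summable fun n : ℕ => (n : ℝ) * p n)
    (u : ℕ → ℝ) (hu0 : u 0 = 1)
    (hu : ∀ n, 1 ≤ n → u n = ∑ k ∈ Finset.Icc 1 n, p k * u (n - k))
    (e : ℕ → ℝ)
    (he : ∀ n, e n = (∑' j : ℕ, if n + 1 ≤ j then p j else 0) / ∑' n : ℕ, (n : ℝ) * p n) :
    ∀ n : ℕ, ∑ k ∈ Finset.range (n + 1), e k * u (n - k)
      = (∑' n : ℕ, (n : ℝ) * p n)⁻¹ := by
  have hps : Summable p := by
    apply Summable.of_nonneg_of_le hpnn _ hmean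
    intro n
    rcases Nat.eq_zero_or_pos n with h | h
    · simp [h, hp0]
    · nlinarith [hpnn n, Nat.one_le_cast (α := ℝ) |>.mpr h]
  have hT : ∀ k : ℕ, (∑' j : ℕ, if k + 1 ≤ j then p j else 0)
      = 1 - ∑ j ∈ range (k + 1), p j := by
    intro k
    have hgs : Summable (fun j : ℕ => if j ∈ range (k + 1) then p j else 0) :=
      summable_of_ne_finset_zero (s := range (k + 1)) (fun j hj => if_neg hj)
    have hfun : (fun j : ℕ => if k + 1 ≤ j then p j else 0)
        = fun j => p j - (if j ∈ range (k + 1) then p j else 0) := by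
      funext j
      by_cases h : k + 1 ≤ j
      · have h' : ¬ j < k + 1 := by omega
        simp [h, Finset.mem_range, h']
      · have h' : j < k + 1 := by omega
        simp [h, Finset.mem_range, h']
    rw [hfun, Summable.tsum_sub hps hgs, hpsum,
      tsum_eq_sum (s := range (k + 1)) (fun j hj => if_neg hj)]
    congr 1
    exact Finset.sum_congr rfl (fun j hj => if_pos hj)
  intro n
  have hrw : ∀ k, e k = (1 - ∑ j ∈ range (k + 1), p j) / ∑' n : ℕ, (n : ℝ) * p n := by
    intro k; rw [he k, hT k]
  calc ∑ k ∈ Finset.range (n + 1), e k * u (n - k)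
      = (∑ k ∈ range (n + 1), (1 - ∑ j ∈ range (k + 1), p j) * u (n - k))
          / ∑' n : ℕ, (n : ℝ) * p n := by
        rw [Finset.sum_div]
        exact Finset.sum_congr rfl (fun k _ => by rw [hrw k, div_mul_eq_mul_div])
    _ = (∑' n : ℕ, (n : ℝ) * p n)⁻¹ := by
        rw [key p u hp0 hu0 hu n, one_div]
end

section
/- Let p be an increment distribution and let d, d' be two delay distributions on {0, 1, 2, ...}. On a probability space carrying mutually independent random variables Y₀ ~ d, Y₀' ~ d', and two independent i.i.d. sequences (Y_i)_{i≥1}, (Y_i')_{i≥1} each with law p, define the renewal indicator processes V^d(n) := 1 if Y₀ + Y₁ + ... + Y_j = n for some j ≥ 0 (and 0 otherwise), and V^{d'}(n) analogously from (Y_i'). Let T := min{n ≥ 0 : V^d(n) = V^{d'}(n) = 1} be the first simultaneous renewal time (T = ∞ if there is none). Then for every n ≥ 0, |ℙ{V^d(n) = 1} − ℙ{V^{d'}(n) = 1}| ≤ ℙ{T > n}. -/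
/-!
Statement 6 (coupling inequality for renewal processes): given an increment distribution
`p` and delay distributions `d, d'`, and mutually independent random variables
`Y₀ ~ d`, `Y₀' ~ d'`, and i.i.d. sequences `(Y_i)_{i≥1}, (Y_i')_{i≥1} ~ p`, let
`R ω = {n : some partial sum Y₀ + ⋯ + Y_j equals n}` (the renewal set) and similarly `R'`,
and let `T = min{n ≥ 0 : n ∈ R ∧ n ∈ R'}` (`T = ∞` if there is no simultaneous renewal).
Then `|ℙ{V^d(n) = 1} - ℙ{V^{d'}(n) = 1}| ≤ ℙ{T > n}` for every `n ≥ 0`.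

Distributions are modelled as real sequences (`p 0 = 0` since increments are `≥ 1`); mutual
independence of the whole family is expressed via `iIndepFun` on the family indexed by
`ℕ ⊕ ℕ` combining the two sequences. `T` takes values in `ℕ∞`.
-/

open MeasureTheory ProbabilityTheory Finset

lemma aux_indep {Ω ι : Type*} [MeasurableSpace Ω] (Pr : Measure Ω)
    (f : ι → Ω → ℕ) (hmeas : ∀ i, Measurable (f i))
    (hindep : iIndepFun f Pr)
    (Sf Tf : Finset ι) (hdisj : Disjoint Sf Tf)
    (A B : Set Ω)
    (hA : ∀ ω ω', (∀ i ∈ Sf, f i ω = f i ω') → ω ∈ A → ω' ∈ A)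
    (hB : ∀ ω ω', (∀ i ∈ Tf, f i ω = f i ω') → ω ∈ B → ω' ∈ B) :
    Pr (A ∩ B) = Pr A * Pr B := by
  classical
  set Φ : Ω → ({x // x ∈ Sf} → ℕ) := fun ω i => f i ω with hΦ
  set Ψ : Ω → ({x // x ∈ Tf} → ℕ) := fun ω i => f i ω with hΨ
  have hAeq : A = Φ ⁻¹' (Φ '' A) := by
    apply Set.Subset.antisymm (Set.subset_preimage_image _ _)
    rintro ω ⟨ω', hω', hEq⟩
    exact hA ω' ω (fun i hi => congrFun hEq ⟨i, hi⟩) hω'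
  have hBeq : B = Ψ ⁻¹' (Ψ '' B) := by
    apply Set.Subset.antisymm (Set.subset_preimage_image _ _)
    rintro ω ⟨ω', hω', hEq⟩
    exact hB ω' ω (fun i hi => congrFun hEq ⟨i, hi⟩) hω'
  have hind : IndepFun Φ Ψ Pr := hindep.indepFun_finset Sf Tf hdisj hmeas
  rw [hAeq, hBeq]
  exact hind.measure_inter_preimage_eq_mul _ _
    ((Φ '' A).to_countable.measurableSet) ((Ψ '' B).to_countable.measurableSet)

lemma aux_window {Ω ι : Type*} [MeasurableSpace Ω] (Pr : Measure Ω)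
    (f : ι → Ω → ℕ)
    (hindep : iIndepFun f Pr)
    (r : ℕ) (e : Fin r → ι) (he : Function.Injective e)
    (q : ℕ → ENNReal) (hlaw : ∀ i k, Pr (f (e i) ⁻¹' {k}) = q k)
    (v : Fin r → ℕ) :
    Pr {ω | ∀ i, f (e i) ω = v i} = ∏ i, q (v i) := by
  classical
  have hsets : ∀ i : Fin r, {k : ℕ | ∀ i' : Fin r, e i' = e i → k = v i'} = {v i} := by
    intro i
    ext k
    simp only [Set.mem_setOf_eq, Set.mem_singleton_iff]
    exact ⟨fun h => h i rfl, fun h i' hi' => by rw [h, he hi']⟩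
  have hprod := hindep.measure_inter_preimage_eq_mul
      (S := Finset.univ.image e)
      (sets := fun b => {k : ℕ | ∀ i : Fin r, e i = b → k = v i})
      (fun i _ => (Set.to_countable _).measurableSet)
  rw [Finset.set_biInter_finset_image, Finset.prod_image
    (fun i _ i' _ h => he h)] at hprod
  simp only [hsets] at hprod
  have h1 : (⋂ i ∈ Finset.univ, f (e i) ⁻¹' {v i}) = {ω | ∀ i, f (e i) ω = v i} := by
    ext ω; simp
  rw [h1] at hprod
  rw [hprod]
  exact Finset.prod_congr rfl (fun i _ => hlaw i (v i))

theorem renewal_coupling_inequality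
    {Ω : Type*} [MeasurableSpace Ω] (Pr : Measure Ω) [IsProbabilityMeasure Pr]
    (p : ℕ → ℝ) (hp0 : p 0 = 0) (hpnn : ∀ n, 0 ≤ p n) (hpsum : ∑' n, p n = 1)
    (d d' : ℕ → ℝ) (hdnn : ∀ n, 0 ≤ d n) (hdsum : ∑' n, d n = 1)
    (hd'nn : ∀ n, 0 ≤ d' n) (hd'sum : ∑' n, d' n = 1)
    (Y Y' : ℕ → Ω → ℕ)
    (hYmeas : ∀ i, Measurable (Y i)) (hY'meas : ∀ i, Measurable (Y' i))
    (hindep : iIndepFun (Sum.elim Y Y') Pr)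
    (hY0law : ∀ k, Pr (Y 0 ⁻¹' {k}) = ENNReal.ofReal (d k))
    (hY'0law : ∀ k, Pr (Y' 0 ⁻¹' {k}) = ENNReal.ofReal (d' k))
    (hYlaw : ∀ i, 1 ≤ i → ∀ k, Pr (Y i ⁻¹' {k}) = ENNReal.ofReal (p k))
    (hY'law : ∀ i, 1 ≤ i → ∀ k, Pr (Y' i ⁻¹' {k}) = ENNReal.ofReal (p k))
    -- the renewal sets of the two renewal processes
    (R R' : Ω → Set ℕ)
    (hR : ∀ ω, R ω = {n | ∃ j : ℕ, ∑ i ∈ Finset.range (j + 1), Y i ω = n})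
    (hR' : ∀ ω, R' ω = {n | ∃ j : ℕ, ∑ i ∈ Finset.range (j + 1), Y' i ω = n})
    -- the first simultaneous renewal time, valued in ℕ∞
    (T : Ω → ℕ∞)
    (hT : ∀ ω, T ω = sInf {e : ℕ∞ | ∃ m : ℕ, e = (m : ℕ∞) ∧ m ∈ R ω ∧ m ∈ R' ω}) :
    ∀ n : ℕ,
      |(Pr {ω | n ∈ R ω}).toReal - (Pr {ω | n ∈ R' ω}).toReal|
        ≤ (Pr {ω | (n : ℕ∞) < T ω}).toReal := by
  classical
  intro n
  set f : ℕ ⊕ ℕ → Ω → ℕ := Sum.elim Y Y' with hfdef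
  have hfmeas : ∀ i, Measurable (f i) := by rintro (i | i); exacts [hYmeas i, hY'meas i]
  set S : ℕ → Ω → ℕ := fun j ω => ∑ i ∈ Finset.range (j + 1), Y i ω with hSdef
  set S' : ℕ → Ω → ℕ := fun j ω => ∑ i ∈ Finset.range (j + 1), Y' i ω with hS'def
  have hSmeas : ∀ j, Measurable (S j) := fun j => Finset.measurable_sum _ (fun i _ => hYmeas i)
  have hS'meas : ∀ j, Measurable (S' j) := fun j => Finset.measurable_sum _ (fun i _ => hY'meas i)
  set A : ℕ → Set Ω := fun m => {ω | ∃ j, S j ω = m} with hAdef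
  set A' : ℕ → Set Ω := fun m => {ω | ∃ j, S' j ω = m} with hA'def
  have hRA : ∀ m, {ω | m ∈ R ω} = A m := by
    intro m; ext ω; simp only [Set.mem_setOf_eq, hR ω, hAdef]; exact Iff.rfl
  have hRA' : ∀ m, {ω | m ∈ R' ω} = A' m := by
    intro m; ext ω; simp only [Set.mem_setOf_eq, hR' ω, hA'def]; exact Iff.rfl
  have hmemA : ∀ ω m, m ∈ R ω ↔ ω ∈ A m := by
    intro ω m; rw [hR ω]; exact Iff.rfl
  have hmemA' : ∀ ω m, m ∈ R' ω ↔ ω ∈ A' m := by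
    intro ω m; rw [hR' ω]; exact Iff.rfl
  have hAmeas : ∀ m, MeasurableSet (A m) := by
    intro m
    have : A m = ⋃ j, S j ⁻¹' {m} := by ext ω; simp [hAdef, Set.mem_iUnion]
    rw [this]; exact MeasurableSet.iUnion fun j => hSmeas j (measurableSet_singleton m)
  have hA'meas : ∀ m, MeasurableSet (A' m) := by
    intro m
    have : A' m = ⋃ j, S' j ⁻¹' {m} := by ext ω; simp [hA'def, Set.mem_iUnion]
    rw [this]; exact MeasurableSet.iUnion fun j => hS'meas j (measurableSet_singleton m)
  -- the null set
  set N : Set Ω := (⋃ i, Y (i + 1) ⁻¹' {0}) ∪ ⋃ i, Y' (i + 1) ⁻¹' {0} with hNdef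
  have hNmeas : MeasurableSet N := by
    apply MeasurableSet.union <;>
      exact MeasurableSet.iUnion fun i => (by measurability)
  have hNnull : Pr N = 0 := by
    apply measure_union_null <;>
    · apply measure_iUnion_null
      intro i
      first
        | rw [hYlaw (i + 1) (Nat.le_add_left 1 i) 0]
        | rw [hY'law (i + 1) (Nat.le_add_left 1 i) 0]
      simp [hp0]
  have hrem : ∀ X : Set Ω, Pr (X ∩ Nᶜ) = Pr X := by
    intro X
    refine le_antisymm (measure_mono Set.inter_subset_left) ?_
    calc Pr X ≤ Pr ((X ∩ Nᶜ) ∪ N) := measure_mono (fun ω hω => by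
          by_cases h : ω ∈ N
          · exact Or.inr h
          · exact Or.inl ⟨hω, h⟩)
      _ ≤ Pr (X ∩ Nᶜ) + Pr N := measure_union_le _ _
      _ = Pr (X ∩ Nᶜ) := by rw [hNnull, add_zero]
  -- positivity off N
  have hYpos : ∀ ω ∉ N, ∀ i, 1 ≤ Y (i + 1) ω := by
    intro ω hω i
    by_contra h
    push_neg at h
    exact hω (Or.inl (Set.mem_iUnion.2 ⟨i, by simpa [Nat.lt_one_iff] using h⟩))
  have hY'pos : ∀ ω ∉ N, ∀ i, 1 ≤ Y' (i + 1) ω := by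
    intro ω hω i
    by_contra h
    push_neg at h
    exact hω (Or.inr (Set.mem_iUnion.2 ⟨i, by simpa [Nat.lt_one_iff] using h⟩))
  have hSsucc : ∀ ω j, S (j + 1) ω = S j ω + Y (j + 1) ω := by
    intro ω j; simp [hSdef, Finset.sum_range_succ]
  have hS'succ : ∀ ω j, S' (j + 1) ω = S' j ω + Y' (j + 1) ω := by
    intro ω j; simp [hS'def, Finset.sum_range_succ]
  have hSmono : ∀ ω ∉ N, StrictMono (fun j => S j ω) := by
    intro ω hω
    apply strictMono_nat_of_lt_succ
    intro j
    have := hYpos ω hω j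
    rw [hSsucc ω j]; omega
  have hS'mono : ∀ ω ∉ N, StrictMono (fun j => S' j ω) := by
    intro ω hω
    apply strictMono_nat_of_lt_succ
    intro j
    have := hY'pos ω hω j
    rw [hS'succ ω j]; omega
  have hSge : ∀ ω ∉ N, ∀ j, j ≤ S j ω := by
    intro ω hω j
    induction j with
    | zero => exact Nat.zero_le _
    | succ j ih => have := hYpos ω hω j; rw [hSsucc ω j]; omega
  have hS'ge : ∀ ω ∉ N, ∀ j, j ≤ S' j ω := by
    intro ω hω j
    induction j with
    | zero => exact Nat.zero_le _
    | succ j ih => have := hY'pos ω hω j; rw [hS'succ ω j]; omega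
  -- D: simultaneous renewal by time n
  set D : Set Ω := ⋃ m ∈ Finset.range (n + 1), A m ∩ A' m with hDdef
  have hDmeas : MeasurableSet D := by
    apply MeasurableSet.biUnion (Finset.range (n + 1)).countable_toSet
    exact fun m _ => (hAmeas m).inter (hA'meas m)
  have hTset : {ω | (n : ℕ∞) < T ω} = Dᶜ := by
    ext ω
    simp only [Set.mem_setOf_eq, hT ω, Set.mem_compl_iff, hDdef, Set.mem_iUnion,
      Finset.mem_range, Set.mem_inter_iff]
    constructor
    · rintro h ⟨m, hm, hA1, hA2⟩
      have hmem : (m : ℕ∞) ∈ {e : ℕ∞ | ∃ m' : ℕ, e = (m' : ℕ∞) ∧ m' ∈ R ω ∧ m' ∈ R' ω} :=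
        ⟨m, rfl, (hmemA ω m).2 hA1, (hmemA' ω m).2 hA2⟩
      have := sInf_le hmem
      have hmn : (m : ℕ∞) ≤ (n : ℕ∞) := Nat.cast_le.2 (by omega)
      exact absurd (lt_of_lt_of_le h (le_trans this hmn)) (lt_irrefl _)
    · intro h
      have hle : ((n + 1 : ℕ) : ℕ∞) ≤ sInf {e : ℕ∞ | ∃ m' : ℕ, e = (m' : ℕ∞) ∧ m' ∈ R ω ∧ m' ∈ R' ω} := by
        apply le_sInf
        rintro e ⟨m, rfl, hR1, hR2⟩
        have hnot : ¬ m < n + 1 := fun hm => h ⟨m, hm, (hmemA ω m).1 hR1, (hmemA' ω m).1 hR2⟩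
        exact_mod_cast (by omega : n + 1 ≤ m)
      refine lt_of_lt_of_le ?_ hle
      exact_mod_cast Nat.lt_succ_self n
  -- the key identity
  -- splitting of partial sums
  have hSsplit : ∀ (ω : Ω) (a l : ℕ), a ≤ l →
      S l ω = S a ω + ∑ i ∈ Finset.range (l - a), Y (a + 1 + i) ω := by
    intro ω a l hal
    have h1 : l + 1 = (a + 1) + (l - a) := by omega
    calc S l ω = ∑ i ∈ Finset.range ((a + 1) + (l - a)), Y i ω := by rw [← h1]
      _ = S a ω + ∑ i ∈ Finset.range (l - a), Y (a + 1 + i) ω := by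
          rw [Finset.sum_range_add]
  have hS'split : ∀ (ω : Ω) (a l : ℕ), a ≤ l →
      S' l ω = S' a ω + ∑ i ∈ Finset.range (l - a), Y' (a + 1 + i) ω := by
    intro ω a l hal
    have h1 : l + 1 = (a + 1) + (l - a) := by omega
    calc S' l ω = ∑ i ∈ Finset.range ((a + 1) + (l - a)), Y' i ω := by rw [← h1]
      _ = S' a ω + ∑ i ∈ Finset.range (l - a), Y' (a + 1 + i) ω := by
          rw [Finset.sum_range_add]
  have hsumge : ∀ ω ∉ N, ∀ (a k : ℕ), k ≤ ∑ i ∈ Finset.range k, Y (a + 1 + i) ω := by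
    intro ω hω a k
    calc k = ∑ _i ∈ Finset.range k, 1 := by simp
      _ ≤ ∑ i ∈ Finset.range k, Y (a + 1 + i) ω := by
          apply Finset.sum_le_sum
          intro i _
          have h := hYpos ω hω (a + i)
          rwa [show a + i + 1 = a + 1 + i by omega] at h
  have hsumge' : ∀ ω ∉ N, ∀ (a k : ℕ), k ≤ ∑ i ∈ Finset.range k, Y' (a + 1 + i) ω := by
    intro ω hω a k
    calc k = ∑ _i ∈ Finset.range k, 1 := by simp
      _ ≤ ∑ i ∈ Finset.range k, Y' (a + 1 + i) ω := by
          apply Finset.sum_le_sum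
          intro i _
          have h := hY'pos ω hω (a + i)
          rwa [show a + i + 1 = a + 1 + i by omega] at h
  have hkey : Pr (A n ∩ D) = Pr (A' n ∩ D) := by
    set E : ℕ × ℕ × ℕ → Set Ω := fun t =>
      {ω | S t.2.1 ω = t.1 ∧ S' t.2.2 ω = t.1 ∧
        ∀ m' < t.1, ¬((∃ l ≤ t.2.1, S l ω = m') ∧ (∃ l ≤ t.2.2, S' l ω = m'))} with hEdef
    set tri : Finset (ℕ × ℕ × ℕ) :=
      Finset.range (n + 1) ×ˢ (Finset.range (n + 1) ×ˢ Finset.range (n + 1)) with htri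
    have hEmeas : ∀ t, MeasurableSet (E t) := by
      rintro ⟨m, j, j'⟩
      have h1 : ∀ (m' jb : ℕ), MeasurableSet {ω | ∃ l ≤ jb, S l ω = m'} := by
        intro m' jb
        have he : {ω | ∃ l ≤ jb, S l ω = m'} = ⋃ l, ⋃ (_ : l ≤ jb), S l ⁻¹' {m'} := by
          ext ω; simp
        rw [he]
        exact MeasurableSet.iUnion fun l => MeasurableSet.iUnion fun _ =>
          hSmeas l (measurableSet_singleton _)
      have h2 : ∀ (m' jb : ℕ), MeasurableSet {ω | ∃ l ≤ jb, S' l ω = m'} := by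
        intro m' jb
        have he : {ω | ∃ l ≤ jb, S' l ω = m'} = ⋃ l, ⋃ (_ : l ≤ jb), S' l ⁻¹' {m'} := by
          ext ω; simp
        rw [he]
        exact MeasurableSet.iUnion fun l => MeasurableSet.iUnion fun _ =>
          hS'meas l (measurableSet_singleton _)
      have he : E (m, j, j') = (S j ⁻¹' {m}) ∩ ((S' j' ⁻¹' {m}) ∩
          ⋂ m', ⋂ (_ : m' < m),
            ({ω | ∃ l ≤ j, S l ω = m'} ∩ {ω | ∃ l ≤ j', S' l ω = m'})ᶜ) := by
        ext ω
        simp only [hEdef, Set.mem_setOf_eq, Set.mem_inter_iff, Set.mem_preimage,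
          Set.mem_singleton_iff, Set.mem_iInter, Set.mem_compl_iff]
      rw [he]
      exact (hSmeas j (measurableSet_singleton _)).inter
        ((hS'meas j' (measurableSet_singleton _)).inter
          (MeasurableSet.iInter fun m' => MeasurableSet.iInter fun _ =>
            ((h1 m' j).inter (h2 m' j')).compl))
    have hEdisj : ∀ ω ∉ N, ∀ t₁ t₂ : ℕ × ℕ × ℕ, t₁ ≠ t₂ → ω ∈ E t₁ → ω ∈ E t₂ → False := by
      intro ω hω
      have hasym : ∀ (m₁ j₁ j₁' m₂ j₂ j₂' : ℕ), m₁ < m₂ →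
          ω ∈ E (m₁, j₁, j₁') → ω ∈ E (m₂, j₂, j₂') → False := by
        rintro m₁ j₁ j₁' m₂ j₂ j₂' hlt ⟨hS1, hS1', -⟩ ⟨hS2, hS2', hmin⟩
        apply hmin m₁ hlt
        constructor
        · refine ⟨j₁, ?_, hS1⟩
          have hss : S j₁ ω < S j₂ ω := by rw [hS1, hS2]; omega
          exact le_of_lt ((hSmono ω hω).lt_iff_lt.1 hss)
        · refine ⟨j₁', ?_, hS1'⟩
          have hss : S' j₁' ω < S' j₂' ω := by rw [hS1', hS2']; omega
          exact le_of_lt ((hS'mono ω hω).lt_iff_lt.1 hss)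
      rintro ⟨m₁, j₁, j₁'⟩ ⟨m₂, j₂, j₂'⟩ hne h₁ h₂
      rcases lt_trichotomy m₁ m₂ with h | h | h
      · exact hasym _ _ _ _ _ _ h h₁ h₂
      · subst h
        obtain ⟨hS1, hS1', -⟩ := h₁
        obtain ⟨hS2, hS2', -⟩ := h₂
        have hj : j₁ = j₂ := (hSmono ω hω).injective (by rw [hS1, hS2])
        have hj' : j₁' = j₂' := (hS'mono ω hω).injective (by rw [hS1', hS2'])
        exact hne (by rw [hj, hj'])
      · exact hasym _ _ _ _ _ _ h h₂ h₁
    have hptD : ∀ ω, ω ∉ N → (ω ∈ D ↔ ∃ t ∈ tri, ω ∈ E t) := by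
      intro ω hω
      constructor
      · intro hD
        simp only [hDdef, Set.mem_iUnion, Finset.mem_range, Set.mem_inter_iff] at hD
        obtain ⟨m, hmn, hAm, hA'm⟩ := hD
        have hex : ∃ m', m' ≤ n ∧ ω ∈ A m' ∧ ω ∈ A' m' := ⟨m, by omega, hAm, hA'm⟩
        set m₀ := Nat.find hex with hm₀
        obtain ⟨hm₀n, hAm₀, hA'm₀⟩ := Nat.find_spec hex
        obtain ⟨j, hj⟩ := hAm₀
        obtain ⟨j', hj'⟩ := hA'm₀
        have hjle : j ≤ n := le_trans (le_trans (hSge ω hω j) (le_of_eq hj)) hm₀n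
        have hj'le : j' ≤ n := le_trans (le_trans (hS'ge ω hω j') (le_of_eq hj')) hm₀n
        refine ⟨(m₀, j, j'), ?_, ?_⟩
        · simp only [htri, Finset.mem_product, Finset.mem_range]
          exact ⟨by omega, by omega, by omega⟩
        · refine ⟨hj, hj', ?_⟩
          rintro m' hm' ⟨⟨l, -, hSl⟩, ⟨l', -, hS'l⟩⟩
          exact Nat.find_min hex hm' ⟨by omega, ⟨l, hSl⟩, ⟨l', hS'l⟩⟩
      · rintro ⟨⟨m, j, j'⟩, htm, hSj, hSj', -⟩
        simp only [htri, Finset.mem_product, Finset.mem_range] at htm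
        simp only [hDdef, Set.mem_iUnion, Finset.mem_range, Set.mem_inter_iff]
        exact ⟨m, by omega, ⟨j, hSj⟩, ⟨j', hSj'⟩⟩
    have hsum : ∀ X : Set Ω, MeasurableSet X → Pr (X ∩ D) = ∑ t ∈ tri, Pr (X ∩ E t) := by
      intro X hX
      rw [← hrem (X ∩ D)]
      have hset : (X ∩ D) ∩ Nᶜ = ⋃ t ∈ tri, ((X ∩ E t) ∩ Nᶜ) := by
        ext ω
        simp only [Set.mem_inter_iff, Set.mem_compl_iff, Set.mem_iUnion]
        constructor
        · rintro ⟨⟨hXω, hD⟩, hN⟩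
          obtain ⟨t, ht, hE⟩ := (hptD ω hN).1 hD
          exact ⟨t, ht, ⟨hXω, hE⟩, hN⟩
        · rintro ⟨t, ht, ⟨hXω, hE⟩, hN⟩
          exact ⟨⟨hXω, (hptD ω hN).2 ⟨t, ht, hE⟩⟩, hN⟩
      rw [hset, measure_biUnion_finset ?_ ?_]
      · exact Finset.sum_congr rfl fun t _ => hrem _
      · intro t₁ _ t₂ _ hne
        apply Set.disjoint_left.2
        rintro ω ⟨⟨-, hE1⟩, hN⟩ ⟨⟨-, hE2⟩, -⟩
        exact hEdisj ω hN t₁ t₂ hne hE1 hE2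
      · exact fun t _ => (hX.inter (hEmeas t)).inter hNmeas.compl
    have hterm : ∀ t ∈ tri, Pr (A n ∩ E t) = Pr (A' n ∩ E t) := by
      rintro ⟨m, j, j'⟩ htm
      simp only [htri, Finset.mem_product, Finset.mem_range] at htm
      obtain ⟨hm, hj, hj'⟩ := htm
      by_cases hmn : m = n
      · subst hmn
        have h1 : A m ∩ E (m, j, j') = E (m, j, j') :=
          Set.inter_eq_self_of_subset_right (by rintro ω ⟨hS1, -, -⟩; exact ⟨j, hS1⟩)
        have h2 : A' m ∩ E (m, j, j') = E (m, j, j') :=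
          Set.inter_eq_self_of_subset_right (by rintro ω ⟨-, hS1', -⟩; exact ⟨j', hS1'⟩)
        rw [h1, h2]
      · have hmltn : m < n := by omega
        set r : ℕ := n - m with hrdef
        have hr1 : 1 ≤ r := by omega
        set B : Set Ω :=
          {ω | ∃ k, 1 ≤ k ∧ k ≤ r ∧ ∑ i ∈ Finset.range k, Y (j + 1 + i) ω = r} with hBdef
        set B' : Set Ω :=
          {ω | ∃ k, 1 ≤ k ∧ k ≤ r ∧ ∑ i ∈ Finset.range k, Y' (j' + 1 + i) ω = r} with hB'def
        have hrepl : ∀ ω ∉ N, ω ∈ E (m, j, j') → (ω ∈ A n ↔ ω ∈ B) := by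
          intro ω hω hE
          obtain ⟨hSj, -, -⟩ := hE
          constructor
          · rintro ⟨l, hSl⟩
            have hjl : j < l := by
              have hss : S j ω < S l ω := by rw [hSj, hSl]; omega
              exact (hSmono ω hω).lt_iff_lt.1 hss
            have hsp := hSsplit ω j l (by omega)
            rw [hSl, hSj] at hsp
            have hsumr : ∑ i ∈ Finset.range (l - j), Y (j + 1 + i) ω = r := by omega
            refine ⟨l - j, by omega, ?_, hsumr⟩
            have := hsumge ω hω j (l - j)
            omega
          · rintro ⟨k, hk1, hkr, hks⟩
            refine ⟨j + k, ?_⟩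
            have hsp := hSsplit ω j (j + k) (by omega)
            rw [hSj] at hsp
            rw [hsp, show j + k - j = k by omega, hks]
            omega
        have hrepl' : ∀ ω ∉ N, ω ∈ E (m, j, j') → (ω ∈ A' n ↔ ω ∈ B') := by
          intro ω hω hE
          obtain ⟨-, hSj', -⟩ := hE
          constructor
          · rintro ⟨l, hSl⟩
            have hjl : j' < l := by
              have hss : S' j' ω < S' l ω := by rw [hSj', hSl]; omega
              exact (hS'mono ω hω).lt_iff_lt.1 hss
            have hsp := hS'split ω j' l (by omega)
            rw [hSl, hSj'] at hsp
            have hsumr : ∑ i ∈ Finset.range (l - j'), Y' (j' + 1 + i) ω = r := by omega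
            refine ⟨l - j', by omega, ?_, hsumr⟩
            have := hsumge' ω hω j' (l - j')
            omega
          · rintro ⟨k, hk1, hkr, hks⟩
            refine ⟨j' + k, ?_⟩
            have hsp := hS'split ω j' (j' + k) (by omega)
            rw [hSj'] at hsp
            rw [hsp, show j' + k - j' = k by omega, hks]
            omega
        have hPAE : Pr (A n ∩ E (m, j, j')) = Pr (B ∩ E (m, j, j')) := by
          rw [← hrem (A n ∩ E (m, j, j')), ← hrem (B ∩ E (m, j, j'))]
          congr 1
          ext ω
          simp only [Set.mem_inter_iff, Set.mem_compl_iff]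
          constructor
          · rintro ⟨⟨hAω, hE⟩, hN⟩; exact ⟨⟨(hrepl ω hN hE).1 hAω, hE⟩, hN⟩
          · rintro ⟨⟨hBω, hE⟩, hN⟩; exact ⟨⟨(hrepl ω hN hE).2 hBω, hE⟩, hN⟩
        have hPA'E : Pr (A' n ∩ E (m, j, j')) = Pr (B' ∩ E (m, j, j')) := by
          rw [← hrem (A' n ∩ E (m, j, j')), ← hrem (B' ∩ E (m, j, j'))]
          congr 1
          ext ω
          simp only [Set.mem_inter_iff, Set.mem_compl_iff]
          constructor
          · rintro ⟨⟨hAω, hE⟩, hN⟩; exact ⟨⟨(hrepl' ω hN hE).1 hAω, hE⟩, hN⟩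
          · rintro ⟨⟨hBω, hE⟩, hN⟩; exact ⟨⟨(hrepl' ω hN hE).2 hBω, hE⟩, hN⟩
        -- the past event depends on coordinates inl (0..j), inr (0..j')
        set Tf : Finset (ℕ ⊕ ℕ) :=
          ((Finset.range (j + 1)).image Sum.inl) ∪ ((Finset.range (j' + 1)).image Sum.inr)
          with hTfdef
        have hEinv : ∀ ω ω', (∀ i ∈ Tf, f i ω = f i ω') →
            ω ∈ E (m, j, j') → ω' ∈ E (m, j, j') := by
          intro ω ω' hcoord hE
          have hYeq : ∀ i ≤ j, Y i ω = Y i ω' := by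
            intro i hi
            exact hcoord (Sum.inl i) (Finset.mem_union_left _
              (Finset.mem_image_of_mem _ (Finset.mem_range.2 (by omega))))
          have hY'eq : ∀ i ≤ j', Y' i ω = Y' i ω' := by
            intro i hi
            exact hcoord (Sum.inr i) (Finset.mem_union_right _
              (Finset.mem_image_of_mem _ (Finset.mem_range.2 (by omega))))
          have hSeq : ∀ l ≤ j, S l ω = S l ω' := by
            intro l hl
            exact Finset.sum_congr rfl fun i hi =>
              hYeq i (by have := Finset.mem_range.1 hi; omega)
          have hS'eq : ∀ l ≤ j', S' l ω = S' l ω' := by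
            intro l hl
            exact Finset.sum_congr rfl fun i hi =>
              hY'eq i (by have := Finset.mem_range.1 hi; omega)
          obtain ⟨hSj, hSj', h3⟩ := hE
          refine ⟨by rw [← hSeq j le_rfl]; exact hSj,
            by rw [← hS'eq j' le_rfl]; exact hSj', ?_⟩
          rintro m' hm' ⟨⟨l, hl, hSl⟩, ⟨l', hl', hS'l⟩⟩
          exact h3 m' hm' ⟨⟨l, hl, by rw [hSeq l hl]; exact hSl⟩,
            ⟨l', hl', by rw [hS'eq l' hl']; exact hS'l⟩⟩
        have hfac : Pr (B ∩ E (m, j, j')) = Pr B * Pr (E (m, j, j')) := by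
          apply aux_indep Pr f hfmeas hindep
            ((Finset.Ico (j + 1) (j + 1 + r)).image Sum.inl) Tf
          · rw [Finset.disjoint_left]
            rintro x hx hx'
            simp only [Finset.mem_image, Finset.mem_Ico] at hx
            obtain ⟨a, ha, rfl⟩ := hx
            simp only [hTfdef, Finset.mem_union, Finset.mem_image, Finset.mem_range] at hx'
            rcases hx' with ⟨b, hb, hbe⟩ | ⟨b, hb, hbe⟩
            · rw [Sum.inl.injEq] at hbe; omega
            · exact Sum.inr_ne_inl hbe
          · rintro ω ω' hcoord ⟨k, hk1, hkr, hks⟩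
            refine ⟨k, hk1, hkr, ?_⟩
            rw [← hks]
            apply Finset.sum_congr rfl
            intro i hi
            have hik := Finset.mem_range.1 hi
            exact (hcoord (Sum.inl (j + 1 + i))
              (Finset.mem_image_of_mem _ (Finset.mem_Ico.2 ⟨by omega, by omega⟩))).symm
          · exact hEinv
        have hfac' : Pr (B' ∩ E (m, j, j')) = Pr B' * Pr (E (m, j, j')) := by
          apply aux_indep Pr f hfmeas hindep
            ((Finset.Ico (j' + 1) (j' + 1 + r)).image Sum.inr) Tf
          · rw [Finset.disjoint_left]
            rintro x hx hx'
            simp only [Finset.mem_image, Finset.mem_Ico] at hx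
            obtain ⟨a, ha, rfl⟩ := hx
            simp only [hTfdef, Finset.mem_union, Finset.mem_image, Finset.mem_range] at hx'
            rcases hx' with ⟨b, hb, hbe⟩ | ⟨b, hb, hbe⟩
            · exact Sum.inl_ne_inr hbe
            · rw [Sum.inr.injEq] at hbe; omega
          · rintro ω ω' hcoord ⟨k, hk1, hkr, hks⟩
            refine ⟨k, hk1, hkr, ?_⟩
            rw [← hks]
            apply Finset.sum_congr rfl
            intro i hi
            have hik := Finset.mem_range.1 hi
            exact (hcoord (Sum.inr (j' + 1 + i))
              (Finset.mem_image_of_mem _ (Finset.mem_Ico.2 ⟨by omega, by omega⟩))).symm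
          · exact hEinv
        have hBB' : Pr B = Pr B' := by
          set W : Ω → (Fin r → ℕ) := fun ω i => Y (j + 1 + (i : ℕ)) ω with hWdef
          set W' : Ω → (Fin r → ℕ) := fun ω i => Y' (j' + 1 + (i : ℕ)) ω with hW'def
          set G : Set (Fin r → ℕ) :=
            {v | ∃ k, 1 ≤ k ∧ k ≤ r ∧
              ∑ i ∈ Finset.range k, (if h : i < r then v ⟨i, h⟩ else 0) = r} with hGdef
          have hBW : B = W ⁻¹' G := by
            ext ω
            simp only [hBdef, hGdef, Set.mem_setOf_eq, Set.mem_preimage]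
            have hsums : ∀ k, k ≤ r →
                (∑ i ∈ Finset.range k, (if h : i < r then W ω ⟨i, h⟩ else 0))
                  = ∑ i ∈ Finset.range k, Y (j + 1 + i) ω := by
              intro k hk
              apply Finset.sum_congr rfl
              intro i hi
              have hik := Finset.mem_range.1 hi
              rw [dif_pos (show i < r by omega)]
            constructor
            · rintro ⟨k, h1, h2, h3⟩
              exact ⟨k, h1, h2, by rw [hsums k h2]; exact h3⟩
            · rintro ⟨k, h1, h2, h3⟩
              exact ⟨k, h1, h2, by rw [← hsums k h2]; exact h3⟩
          have hBW2 : B' = W' ⁻¹' G := by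
            ext ω
            simp only [hB'def, hGdef, Set.mem_setOf_eq, Set.mem_preimage]
            have hsums : ∀ k, k ≤ r →
                (∑ i ∈ Finset.range k, (if h : i < r then W' ω ⟨i, h⟩ else 0))
                  = ∑ i ∈ Finset.range k, Y' (j' + 1 + i) ω := by
              intro k hk
              apply Finset.sum_congr rfl
              intro i hi
              have hik := Finset.mem_range.1 hi
              rw [dif_pos (show i < r by omega)]
            constructor
            · rintro ⟨k, h1, h2, h3⟩
              exact ⟨k, h1, h2, by rw [hsums k h2]; exact h3⟩
            · rintro ⟨k, h1, h2, h3⟩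
              exact ⟨k, h1, h2, by rw [← hsums k h2]; exact h3⟩
          have hWmeas : Measurable W := measurable_pi_lambda _ fun i => hYmeas _
          have hW'meas : Measurable W' := measurable_pi_lambda _ fun i => hY'meas _
          have hmap : Pr.map W = Pr.map W' := by
            apply MeasureTheory.Measure.ext_of_singleton
            intro v
            rw [Measure.map_apply hWmeas (measurableSet_singleton v),
              Measure.map_apply hW'meas (measurableSet_singleton v)]
            have e1 : W ⁻¹' {v} =
                {ω | ∀ i : Fin r, f (Sum.inl (j + 1 + (i : ℕ))) ω = v i} := by
              ext ω
              simp only [Set.mem_preimage, Set.mem_singleton_iff, Set.mem_setOf_eq, hWdef]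
              exact ⟨fun h i => congrFun h i, fun h => funext h⟩
            have e2 : W' ⁻¹' {v} =
                {ω | ∀ i : Fin r, f (Sum.inr (j' + 1 + (i : ℕ))) ω = v i} := by
              ext ω
              simp only [Set.mem_preimage, Set.mem_singleton_iff, Set.mem_setOf_eq, hW'def]
              exact ⟨fun h i => congrFun h i, fun h => funext h⟩
            rw [e1, e2]
            rw [aux_window Pr f hindep r (fun i => Sum.inl (j + 1 + (i : ℕ)))
              (fun a b hab => by
                rw [Sum.inl.injEq] at hab
                exact Fin.ext (by omega))
              (fun k => ENNReal.ofReal (p k))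
              (fun i k => hYlaw (j + 1 + (i : ℕ)) (by omega) k) v]
            rw [aux_window Pr f hindep r (fun i => Sum.inr (j' + 1 + (i : ℕ)))
              (fun a b hab => by
                rw [Sum.inr.injEq] at hab
                exact Fin.ext (by omega))
              (fun k => ENNReal.ofReal (p k))
              (fun i k => hY'law (j' + 1 + (i : ℕ)) (by omega) k) v]
          calc Pr B = Pr.map W G := by
                rw [hBW, Measure.map_apply hWmeas (G.to_countable.measurableSet)]
            _ = Pr.map W' G := by rw [hmap]
            _ = Pr B' := by
                rw [hBW2, Measure.map_apply hW'meas (G.to_countable.measurableSet)]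
        rw [hPAE, hPA'E, hfac, hfac', hBB']
    rw [hsum (A n) (hAmeas n), hsum (A' n) (hA'meas n)]
    exact Finset.sum_congr rfl hterm
  -- conclusion
  rw [hRA, hRA', hTset]
  have hsplit : ∀ X : Set Ω, Pr X = Pr (X ∩ D) + Pr (X \ D) := by
    intro X
    rw [measure_inter_add_diff X hDmeas]
  have hfin : ∀ X : Set Ω, Pr X ≠ ⊤ := fun X => measure_ne_top Pr X
  have h1 := hsplit (A n)
  have h2 := hsplit (A' n)
  have hb1 : (Pr (A n \ D)).toReal ≤ (Pr Dᶜ).toReal := by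
    apply ENNReal.toReal_mono (hfin _)
    exact measure_mono (fun ω hω => hω.2)
  have hb2 : (Pr (A' n \ D)).toReal ≤ (Pr Dᶜ).toReal := by
    apply ENNReal.toReal_mono (hfin _)
    exact measure_mono (fun ω hω => hω.2)
  have e1 : (Pr (A n)).toReal = (Pr (A n ∩ D)).toReal + (Pr (A n \ D)).toReal := by
    rw [h1, ENNReal.toReal_add (hfin _) (hfin _)]
  have e2 : (Pr (A' n)).toReal = (Pr (A' n ∩ D)).toReal + (Pr (A' n \ D)).toReal := by
    rw [h2, ENNReal.toReal_add (hfin _) (hfin _)]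
  have ekey : (Pr (A n ∩ D)).toReal = (Pr (A' n ∩ D)).toReal := by rw [hkey]
  rw [e1, e2, ekey]
  have hnn : ∀ X : Set Ω, 0 ≤ (Pr X).toReal := fun X => ENNReal.toReal_nonneg
  rw [abs_sub_le_iff]
  constructor <;> nlinarith [hnn (A n \ D), hnn (A' n \ D)]
end

section
/- Let P be a Markov transition kernel on (X, 𝓑), let U ∈ 𝓑, 0 < δ ≤ 1, and let μ be a probability measure with μ(U) = 1 such that P(x, B) ≥ δ μ(B) for all x ∈ U, B ∈ 𝓑. Let P̂ be the associated δ/2-split kernel on X × {0,1}. Then for every x ∈ U: P̂(x₁, U₁) = δ/2 and P̂(x₀, U₁) ≥ δ²/(2(2−δ)); in particular, P̂(z, U₁) ≥ δ²/(2(2−δ)) for all z ∈ U₀ ∪ U₁, so from every point of U₀ ∪ U₁ the split chain enters the atom U₁ in one step with probability at least δ²/(2(2−δ)). -/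
/-!
Statement 10: properties of the `δ/2`-split kernel. Given a Markov kernel `P`, a small set
`U` with `P(x,·) ≥ δ μ(·)` on `U` and `μ(U) = 1` (`0 < δ ≤ 1`), the split kernel `P̂` on
`X × {0,1}` satisfies, for every `x ∈ U`: `P̂(x₁, U₁) = δ/2` and
`P̂(x₀, U₁) ≥ δ²/(2(2-δ))`; in particular `P̂(z, U₁) ≥ δ²/(2(2-δ))` for every
`z ∈ U₀ ∪ U₁`.

`{0,1}` is modelled by `Bool` (`false ↔ 0`, `true ↔ 1`). `splitMeasure U δ λ` is the split
`λ*` of a measure `λ`, and `splitKernel P U μ δ` is the split kernel `P̂`, given pointwise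
by the defining formulas (with truncated subtraction of measures on `U₀`, which agrees with
the intended difference since `2P* ≥ δμ*` there).
-/

open MeasureTheory ProbabilityTheory ENNReal
open scoped Classical

/-- The split `λ*` of a measure `λ`: `λ*(A₀) = (1-δ/2)λ(A∩U) + λ(A∩Uᶜ)`,
`λ*(A₁) = (δ/2)λ(A∩U)`. -/
noncomputable def splitMeasure {X : Type*} [MeasurableSpace X] (U : Set X) (δ : ℝ≥0∞)
    (lam : Measure X) : Measure (X × Bool) :=
  (1 - δ / 2) • ((lam.restrict U).map (fun x => (x, false)))
    + (lam.restrict Uᶜ).map (fun x => (x, false))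
    + (δ / 2) • ((lam.restrict U).map (fun x => (x, true)))

/-- The `δ/2`-split kernel `P̂` on `X × Bool`. -/
noncomputable def splitKernel {X : Type*} [MeasurableSpace X] (P : Kernel X X) (U : Set X)
    (μ : Measure X) (δ : ℝ≥0∞) : X × Bool → Measure (X × Bool) := fun z =>
  if z.2 = true then splitMeasure U δ μ
  else if z.1 ∈ U then
    (2 - δ)⁻¹ • (2 • splitMeasure U δ (P z.1) - δ • splitMeasure U δ μ)
  else splitMeasure U δ (P z.1)

lemma mk_bool_measurable {X : Type*} [MeasurableSpace X] (b : Bool) :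
    Measurable (fun x : X => (x, b)) :=
  measurable_id.prodMk measurable_const

lemma splitMeasure_apply_atom {X : Type*} [MeasurableSpace X] {U : Set X} {δ : ℝ≥0∞}
    (hU : MeasurableSet U) (lam : Measure X) :
    splitMeasure U δ lam (U ×ˢ ({true} : Set Bool)) = δ / 2 * lam U := by
  have hA : MeasurableSet (U ×ˢ ({true} : Set Bool)) := hU.prod (measurableSet_singleton _)
  have h1 : (fun x : X => (x, false)) ⁻¹' (U ×ˢ ({true} : Set Bool)) = ∅ := by ext x; simp
  have h2 : (fun x : X => (x, true)) ⁻¹' (U ×ˢ ({true} : Set Bool)) = U := by ext x; simp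
  simp only [splitMeasure, Measure.coe_add, Pi.add_apply, Measure.smul_apply, smul_eq_mul]
  rw [Measure.map_apply (mk_bool_measurable false) hA,
    Measure.map_apply (mk_bool_measurable false) hA,
    Measure.map_apply (mk_bool_measurable true) hA, h1, h2, Measure.restrict_apply hU]
  simp

lemma smul_measure_mono {Y : Type*} [MeasurableSpace Y] (c : ℝ≥0∞) {a b : Measure Y}
    (h : a ≤ b) : c • a ≤ c • b := by
  intro s
  simp only [Measure.smul_apply, smul_eq_mul]
  exact mul_le_mul_right (h s) c

lemma splitMeasure_mono {X : Type*} [MeasurableSpace X] {U : Set X} {δ : ℝ≥0∞}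
    {a b : Measure X} (h : a ≤ b) : splitMeasure U δ a ≤ splitMeasure U δ b := by
  unfold splitMeasure
  refine add_le_add (add_le_add ?_ ?_) ?_
  · exact smul_measure_mono _ (Measure.map_mono (Measure.restrict_mono subset_rfl h)
      (mk_bool_measurable false))
  · exact Measure.map_mono (Measure.restrict_mono subset_rfl h) (mk_bool_measurable false)
  · exact smul_measure_mono _ (Measure.map_mono (Measure.restrict_mono subset_rfl h)
      (mk_bool_measurable true))

lemma splitMeasure_smul {X : Type*} [MeasurableSpace X] {U : Set X} {δ : ℝ≥0∞}
    (c : ℝ≥0∞) (lam : Measure X) :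
    splitMeasure U δ (c • lam) = c • splitMeasure U δ lam := by
  simp only [splitMeasure, Measure.restrict_smul, Measure.map_smul, smul_add, smul_comm c]

lemma splitMeasure_univ {X : Type*} [MeasurableSpace X] {U : Set X} {δ : ℝ≥0∞}
    (lam : Measure X) :
    splitMeasure U δ lam Set.univ = (1 - δ / 2) * lam U + lam Uᶜ + δ / 2 * lam U := by
  simp only [splitMeasure, Measure.coe_add, Pi.add_apply, Measure.smul_apply, smul_eq_mul]
  rw [Measure.map_apply (mk_bool_measurable false) MeasurableSet.univ,
    Measure.map_apply (mk_bool_measurable false) MeasurableSet.univ,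
    Measure.map_apply (mk_bool_measurable true) MeasurableSet.univ]
  simp

theorem split_kernel_hits_atom
    {X : Type*} [MeasurableSpace X] (P : Kernel X X) [IsMarkovKernel P]
    (U : Set X) (hU : MeasurableSet U)
    (δ : ℝ≥0∞) (hδ0 : 0 < δ) (hδ1 : δ ≤ 1)
    (μ : Measure X) [IsProbabilityMeasure μ] (hμU : μ U = 1)
    (hsmall : ∀ x ∈ U, ∀ B : Set X, MeasurableSet B → δ * μ B ≤ P x B) :
    (∀ x ∈ U,
        splitKernel P U μ δ (x, true) (U ×ˢ ({true} : Set Bool)) = δ / 2 ∧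
        δ ^ 2 / (2 * (2 - δ)) ≤ splitKernel P U μ δ (x, false) (U ×ˢ ({true} : Set Bool))) ∧
      ∀ z ∈ (U ×ˢ ({false} : Set Bool)) ∪ (U ×ˢ ({true} : Set Bool)),
        δ ^ 2 / (2 * (2 - δ)) ≤ splitKernel P U μ δ z (U ×ˢ ({true} : Set Bool)) := by
  have hδtop : δ ≠ ⊤ := (hδ1.trans_lt one_lt_top).ne
  have hA : MeasurableSet (U ×ˢ ({true} : Set Bool)) := hU.prod (measurableSet_singleton _)
  -- key rewriting of the target bound
  have h2δ0 : (2 : ℝ≥0∞) - δ ≠ 0 := by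
    intro h
    have : (2 : ℝ≥0∞) ≤ δ := tsub_eq_zero_iff_le.mp h
    exact absurd (this.trans hδ1) (by norm_num)
  have h2δtop : (2 : ℝ≥0∞) - δ ≠ ⊤ := (tsub_le_self.trans_lt (by norm_num)).ne
  have hkey : δ ^ 2 / (2 * (2 - δ)) = (2 - δ)⁻¹ * (δ ^ 2 / 2) := by
    rw [div_eq_mul_inv, div_eq_mul_inv,
      ENNReal.mul_inv (Or.inl two_ne_zero) (Or.inl (by norm_num))]
    ring
  -- the main estimate at (x, false), x ∈ U
  have hfalse : ∀ x ∈ U, δ ^ 2 / (2 * (2 - δ)) ≤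
      splitKernel P U μ δ (x, false) (U ×ˢ ({true} : Set Bool)) := by
    intro x hx
    have hδμ : δ • μ ≤ P x := by
      rw [Measure.le_iff]
      intro s hs
      simpa using hsmall x hx s hs
    have hle : δ • splitMeasure U δ μ ≤ 2 • splitMeasure U δ (P x) := by
      calc δ • splitMeasure U δ μ = splitMeasure U δ (δ • μ) := (splitMeasure_smul δ μ).symm
        _ ≤ splitMeasure U δ (P x) := splitMeasure_mono hδμ
        _ ≤ 2 • splitMeasure U δ (P x) := by
            rw [two_smul]; exact Measure.le_add_right le_rfl
    haveI : IsFiniteMeasure (δ • splitMeasure U δ μ) := by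
      constructor
      rw [Measure.smul_apply, smul_eq_mul, splitMeasure_univ]
      have h1 : (1 - δ / 2 : ℝ≥0∞) ≠ ⊤ := (tsub_le_self.trans_lt one_lt_top).ne
      have h2 : (δ / 2 : ℝ≥0∞) ≠ ⊤ := by
        rw [div_eq_mul_inv]; exact ENNReal.mul_ne_top hδtop (by simp)
      exact (ENNReal.mul_ne_top hδtop (by
        exact ENNReal.add_ne_top.2 ⟨ENNReal.add_ne_top.2
          ⟨ENNReal.mul_ne_top h1 (measure_ne_top μ U), measure_ne_top μ Uᶜ⟩,
          ENNReal.mul_ne_top h2 (measure_ne_top μ U)⟩)).lt_top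
    have hcalc : splitKernel P U μ δ (x, false) (U ×ˢ ({true} : Set Bool))
        = (2 - δ)⁻¹ * (2 * (δ / 2 * P x U) - δ * (δ / 2 * μ U)) := by
      simp only [splitKernel, hx, if_true, if_neg (by simp : ¬((x, false).2 = true))]
      rw [Measure.smul_apply, smul_eq_mul, Measure.sub_apply hA hle]
      simp only [Measure.smul_apply, smul_eq_mul, nsmul_eq_mul, Nat.cast_ofNat,
        splitMeasure_apply_atom hU]
    rw [hcalc, hkey]
    refine mul_le_mul_right ?_ _
    have h2half : 2 * (δ / 2 * P x U) = δ * P x U := by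
      rw [← mul_assoc, ENNReal.mul_div_cancel two_ne_zero ofNat_ne_top]
    have hPxU : δ ≤ P x U := by
      have := hsmall x hx U hU
      rwa [hμU, mul_one] at this
    calc δ ^ 2 / 2 = (δ * δ - δ * δ / 2) := by
          rw [ENNReal.sub_half (ENNReal.mul_ne_top hδtop hδtop), sq]
      _ ≤ 2 * (δ / 2 * P x U) - δ * (δ / 2 * μ U) := by
          rw [h2half, hμU, mul_one]
          refine tsub_le_tsub (mul_le_mul_right hPxU δ) ?_
          rw [mul_div_assoc]
    done
  have htrue : ∀ x : X, splitKernel P U μ δ (x, true) (U ×ˢ ({true} : Set Bool)) = δ / 2 := by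
    intro x
    show splitMeasure U δ μ (U ×ˢ ({true} : Set Bool)) = δ / 2
    rw [splitMeasure_apply_atom hU, hμU, mul_one]
  refine ⟨fun x hx => ⟨htrue x, hfalse x hx⟩, ?_⟩
  rintro ⟨x, b⟩ hz
  rcases hz with hz | hz
  · obtain ⟨hx, hb⟩ := hz
    simp only [Set.mem_singleton_iff] at hb
    subst hb
    exact hfalse x hx
  · obtain ⟨hx, hb⟩ := hz
    simp only [Set.mem_singleton_iff] at hb
    subst hb
    rw [htrue x, hkey]
    have hinv : (2 - δ)⁻¹ ≤ 1 := by
      rw [ENNReal.inv_le_one]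
      calc (1 : ℝ≥0∞) = 2 - 1 :=
            (ENNReal.sub_eq_of_eq_add one_ne_top one_add_one_eq_two.symm).symm
        _ ≤ 2 - δ := tsub_le_tsub_left hδ1 2
    calc (2 - δ)⁻¹ * (δ ^ 2 / 2) ≤ 1 * (δ / 2) := by
          refine mul_le_mul' hinv (ENNReal.div_le_div_right ?_ 2)
          calc δ ^ 2 = δ * δ := sq δ
            _ ≤ 1 * δ := mul_le_mul_left hδ1 δ
            _ = δ := one_mul δ
      _ = δ / 2 := one_mul _
end

section
/- Let P be a Markov transition kernel on (X, 𝓑), let U ∈ 𝓑, 0 < δ ≤ 1, and let μ be a probability measure with μ(U) = 1 such that P(x, B) ≥ δ μ(B) for all x ∈ U, B ∈ 𝓑. Let P̂ be the associated δ/2-split kernel on X × {0,1}. Then for every finite measure λ on X, (λ*) P̂ = (λP)*, i.e., the split of λ, evolved one step under the split kernel, equals the split of the one-step evolution λP of λ under P. In particular, the original chain started from λ is the marginal (under the projection X × {0,1} → X) of the split chain started from λ*. -/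
/-!
Statement 11: the split chain has the original chain as its marginal. Given a Markov kernel
`P`, a small set `U` with `P(x,·) ≥ δ μ(·)` on `U` and `μ(U) = 1` (`0 < δ ≤ 1`), and the
`δ/2`-split kernel `P̂` on `X × {0,1}`, for every finite measure `λ` on `X` one has
`(λ*) P̂ = (λ P)*`: for every measurable `A ⊆ X × {0,1}`,
`∫ P̂(z, A) λ*(dz) = (λP)*(A)`. In particular (the time-zero instance of the marginal
statement) the projection of `λ*` to `X` is `λ`.

`{0,1}` is modelled by `Bool`. `splitMeasure U δ λ` is the split `λ*` and
`splitKernel P U μ δ` is the split kernel `P̂` (with truncated measure subtraction on `U₀`,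
which agrees with the intended difference since `2P* ≥ δμ*` there).
-/

open MeasureTheory ProbabilityTheory ENNReal
open scoped Classical

section aux
variable {X : Type*} [MeasurableSpace X]

lemma splitMeasure_apply (U : Set X) (δ : ℝ≥0∞) (ν : Measure X)
    {A : Set (X × Bool)} (hA : MeasurableSet A) :
    splitMeasure U δ ν A
      = (1 - δ/2) * ν ((fun x => (x, false)) ⁻¹' A ∩ U)
        + ν ((fun x => (x, false)) ⁻¹' A ∩ Uᶜ)
        + (δ/2) * ν ((fun x => (x, true)) ⁻¹' A ∩ U) := by
  have h0 : Measurable (fun x : X => (x, false)) := measurable_id.prodMk measurable_const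
  have h1 : Measurable (fun x : X => (x, true)) := measurable_id.prodMk measurable_const
  simp [splitMeasure, Measure.map_apply h0 hA, Measure.map_apply h1 hA,
    Measure.restrict_apply (h0 hA), Measure.restrict_apply (h1 hA)]

lemma splitMeasure_fin (U : Set X) {δ : ℝ≥0∞} (hδ1 : δ ≤ 1) (ν : Measure X)
    [IsFiniteMeasure ν] : IsFiniteMeasure (splitMeasure U δ ν) := by
  constructor
  rw [splitMeasure_apply U δ ν MeasurableSet.univ]
  simp only [Set.preimage_univ, Set.univ_inter]
  have hd : δ / 2 ≤ 1 := le_trans ENNReal.half_le_self hδ1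
  refine ENNReal.add_lt_top.2 ⟨ENNReal.add_lt_top.2 ⟨?_, measure_lt_top ν Uᶜ⟩, ?_⟩
  · exact ENNReal.mul_lt_top (lt_of_le_of_lt tsub_le_self one_lt_top) (measure_lt_top ν U)
  · exact ENNReal.mul_lt_top (lt_of_le_of_lt hd one_lt_top) (measure_lt_top ν U)

lemma splitMeasure_smul_le {U : Set X} (hU : MeasurableSet U) {δ : ℝ≥0∞} {μ ν : Measure X}
    (hμ : ∀ B : Set X, MeasurableSet B → δ * μ B ≤ ν B) (hμc : μ Uᶜ = 0) :
    δ • splitMeasure U δ μ ≤ 2 • splitMeasure U δ ν := by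
  rw [Measure.le_iff]
  intro A hA
  have h0 : Measurable (fun x : X => (x, false)) := measurable_id.prodMk measurable_const
  have h1 : Measurable (fun x : X => (x, true)) := measurable_id.prodMk measurable_const
  simp only [Measure.smul_apply, smul_eq_mul, nsmul_eq_mul, Nat.cast_ofNat,
    splitMeasure_apply U δ _ hA]
  set B0 := (fun x : X => (x, false)) ⁻¹' A with hB0def
  set B1 := (fun x : X => (x, true)) ⁻¹' A with hB1def
  have key : ∀ (c : ℝ≥0∞) (B : Set X), MeasurableSet B →
      δ * (c * μ B) ≤ 2 * (c * ν B) := by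
    intro c B hB
    rw [mul_left_comm, mul_left_comm 2]
    exact mul_le_mul_of_nonneg_left ((hμ B hB).trans (le_mul_of_one_le_left zero_le one_le_two)) zero_le
  have hmid : μ (B0 ∩ Uᶜ) = 0 :=
    measure_mono_null Set.inter_subset_right hμc
  have h2 : δ * μ (B0 ∩ Uᶜ) ≤ 2 * ν (B0 ∩ Uᶜ) := by
    simp [hmid]
  simp only [mul_add]
  exact add_le_add (add_le_add (key _ _ ((h0 hA).inter hU)) h2)
    (key _ _ ((h1 hA).inter hU))
end aux

theorem split_chain_marginal
    {X : Type*} [MeasurableSpace X] (P : Kernel X X) [IsMarkovKernel P]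
    (U : Set X) (hU : MeasurableSet U)
    (δ : ℝ≥0∞) (hδ0 : 0 < δ) (hδ1 : δ ≤ 1)
    (μ : Measure X) [IsProbabilityMeasure μ] (hμU : μ U = 1)
    (hsmall : ∀ x ∈ U, ∀ B : Set X, MeasurableSet B → δ * μ B ≤ P x B)
    (lam : Measure X) [IsFiniteMeasure lam] :
    (∀ A : Set (X × Bool), MeasurableSet A →
        ∫⁻ z, splitKernel P U μ δ z A ∂(splitMeasure U δ lam)
          = splitMeasure U δ (lam.bind (fun x => P x)) A) ∧
      (splitMeasure U δ lam).map Prod.fst = lam := by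
  have hδtop : δ ≠ ∞ := (hδ1.trans_lt one_lt_top).ne
  have hd1 : δ / 2 ≤ 1 := le_trans ENNReal.half_le_self hδ1
  have hd1top : (1 : ℝ≥0∞) - δ / 2 ≠ ∞ := (lt_of_le_of_lt tsub_le_self one_lt_top).ne
  have hdhtop : δ / 2 ≠ ∞ := (hd1.trans_lt one_lt_top).ne
  have h2δ0 : (2 : ℝ≥0∞) - δ ≠ 0 := by
    simp only [ne_eq, tsub_eq_zero_iff_le, not_le]
    exact lt_of_le_of_lt hδ1 one_lt_two
  have h2top : (2 : ℝ≥0∞) ≠ ∞ := by norm_num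
  have hμc : μ Uᶜ = 0 := by
    rw [measure_compl hU (measure_ne_top μ U), hμU, measure_univ, tsub_self]
  haveI hSμ : IsFiniteMeasure (splitMeasure U δ μ) := splitMeasure_fin U hδ1 μ
  haveI : IsFiniteMeasure (δ • splitMeasure U δ μ) := by
    constructor
    rw [Measure.smul_apply, smul_eq_mul]
    exact ENNReal.mul_lt_top hδtop.lt_top (measure_lt_top _ _)
  have hle : ∀ x ∈ U, δ • splitMeasure U δ μ ≤ 2 • splitMeasure U δ (P x) :=
    fun x hx => splitMeasure_smul_le hU (fun B hB => hsmall x hx B hB) hμc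
  -- key constant identity
  have hc : (1 - δ/2) * (2 - δ)⁻¹ = 2⁻¹ := by
    have hmul : (1 - δ/2) * 2 = 2 - δ := by
      rw [ENNReal.sub_mul (fun _ _ => h2top), one_mul,
        ENNReal.div_mul_cancel two_ne_zero h2top]
    have := congrArg (fun t => t * (2 - δ)⁻¹ * 2⁻¹) hmul
    calc (1 - δ/2) * (2 - δ)⁻¹
        = (1 - δ/2) * 2 * 2⁻¹ * (2 - δ)⁻¹ := by
          rw [mul_assoc (1 - δ/2), ENNReal.mul_inv_cancel two_ne_zero h2top, mul_one]
      _ = (2 - δ) * (2 - δ)⁻¹ * 2⁻¹ := by rw [hmul]; ring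
      _ = 2⁻¹ := by
          rw [ENNReal.mul_inv_cancel h2δ0 ((lt_of_le_of_lt tsub_le_self h2top.lt_top).ne), one_mul]
  constructor
  · intro A hA
    have h0 : Measurable (fun x : X => (x, false)) := measurable_id.prodMk measurable_const
    have h1 : Measurable (fun x : X => (x, true)) := measurable_id.prodMk measurable_const
    have hB0 : MeasurableSet ((fun x : X => (x, false)) ⁻¹' A) := h0 hA
    have hB1 : MeasurableSet ((fun x : X => (x, true)) ⁻¹' A) := h1 hA
    set m := splitMeasure U δ μ A with hm
    have hmtop : m ≠ ∞ := measure_ne_top _ _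
    set I : X → ℝ≥0∞ := fun x => splitMeasure U δ (P x) A with hI
    set L := lam U with hL
    have hLtop : L ≠ ∞ := measure_ne_top _ _
    -- pointwise values of the split kernel
    have hkU : ∀ x ∈ U, splitKernel P U μ δ (x, false) A = (2 - δ)⁻¹ * (2 * I x - δ * m) := by
      intro x hx
      simp only [splitKernel, Bool.false_eq_true, if_false, if_pos hx]
      rw [Measure.smul_apply, Measure.sub_apply hA (hle x hx)]
      simp [smul_eq_mul, hI, hm]
    have hkc : ∀ x ∈ Uᶜ, splitKernel P U μ δ (x, false) A = I x := by
      intro x hx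
      have hx' : x ∉ U := hx
      simp [splitKernel, hx', hI]
    have happ : ∀ x ∈ U, δ * m ≤ 2 * I x := by
      intro x hx
      have := Measure.le_iff'.1 (hle x hx) A
      simpa [Measure.smul_apply, smul_eq_mul] using this
    -- decompose the integral over the split measure
    have hdec : ∫⁻ z, splitKernel P U μ δ z A ∂(splitMeasure U δ lam)
        = (1 - δ/2) * ∫⁻ x in U, splitKernel P U μ δ (x, false) A ∂lam
          + ∫⁻ x in Uᶜ, splitKernel P U μ δ (x, false) A ∂lam
          + (δ/2) * ∫⁻ x in U, splitKernel P U μ δ (x, true) A ∂lam := by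
      rw [splitMeasure, lintegral_add_measure, lintegral_add_measure,
        lintegral_smul_measure, lintegral_smul_measure,
        (measurableEmbedding_prod_mk_right false).lintegral_map,
        (measurableEmbedding_prod_mk_right false).lintegral_map,
        (measurableEmbedding_prod_mk_right (true : Bool)).lintegral_map, smul_eq_mul, smul_eq_mul]
    have h3 : ∫⁻ x in U, splitKernel P U μ δ (x, true) A ∂lam = m * L := by
      have hk : ∀ x ∈ U, splitKernel P U μ δ (x, true) A = m := fun x _ => by
        simp [splitKernel, hm]
      rw [setLIntegral_congr_fun hU hk, setLIntegral_const]
    have h2i : ∫⁻ x in Uᶜ, splitKernel P U μ δ (x, false) A ∂lam = ∫⁻ x in Uᶜ, I x ∂lam :=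
      setLIntegral_congr_fun hU.compl hkc
    set IU := ∫⁻ x in U, I x ∂lam with hIU
    set IC := ∫⁻ x in Uᶜ, I x ∂lam with hIC
    have hsubfin : δ * m * L ≠ ∞ :=
      ENNReal.mul_ne_top (ENNReal.mul_ne_top hδtop hmtop) hLtop
    have h1i : ∫⁻ x in U, splitKernel P U μ δ (x, false) A ∂lam
        = (2 - δ)⁻¹ * (2 * IU - δ * m * L) := by
      rw [setLIntegral_congr_fun hU hkU,
        lintegral_const_mul' _ _ (ENNReal.inv_ne_top.2 h2δ0),
        lintegral_sub measurable_const
          (by rw [setLIntegral_const]; exact hsubfin)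
          ((ae_restrict_iff' hU).2 (Filter.Eventually.of_forall happ)),
        lintegral_const_mul' _ _ h2top, setLIntegral_const]
    have hble : δ * m * L ≤ 2 * IU := by
      have : ∫⁻ _ in U, δ * m ∂lam ≤ ∫⁻ x in U, 2 * I x ∂lam :=
        lintegral_mono_ae ((ae_restrict_iff' hU).2 (Filter.Eventually.of_forall happ))
      rwa [setLIntegral_const, lintegral_const_mul' _ _ h2top] at this
    -- arithmetic simplification of the left-hand side
    have harith : (1 - δ/2) * ((2 - δ)⁻¹ * (2 * IU - δ * m * L)) + IC + (δ/2) * (m * L)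
        = IU + IC := by
      rw [← mul_assoc, hc, ENNReal.mul_sub (fun _ _ => ENNReal.inv_ne_top.2 two_ne_zero),
        ← mul_assoc, ENNReal.inv_mul_cancel two_ne_zero h2top, one_mul]
      have e1 : 2⁻¹ * (δ * m * L) = δ/2 * (m * L) := by
        rw [ENNReal.div_eq_inv_mul]; ring
      rw [e1, add_right_comm, tsub_add_cancel_of_le]
      calc δ/2 * (m * L) = 2⁻¹ * (δ * m * L) := e1.symm
        _ ≤ 2⁻¹ * (2 * IU) := mul_le_mul_of_nonneg_left hble zero_le
        _ = IU := by rw [← mul_assoc, ENNReal.inv_mul_cancel two_ne_zero h2top, one_mul]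
    -- identify the total integral with the bind measure
    have hIdec : ∀ x, I x = (1 - δ/2) * P x ((fun x : X => (x, false)) ⁻¹' A ∩ U)
        + P x ((fun x : X => (x, false)) ⁻¹' A ∩ Uᶜ)
        + (δ/2) * P x ((fun x : X => (x, true)) ⁻¹' A ∩ U) :=
      fun x => splitMeasure_apply U δ _ hA
    have htot : IU + IC = splitMeasure U δ (lam.bind (fun x => P x)) A := by
      rw [hIU, hIC, lintegral_add_compl I hU, lintegral_congr hIdec,
        lintegral_add_left (((P.measurable_coe (hB0.inter hU)).const_mul _).fun_add
          (P.measurable_coe (hB0.inter hU.compl))),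
        lintegral_add_left ((P.measurable_coe (hB0.inter hU)).const_mul _),
        lintegral_const_mul' _ _ hd1top, lintegral_const_mul' _ _ hdhtop,
        splitMeasure_apply U δ _ hA,
        Measure.bind_apply (hB0.inter hU) P.measurable.aemeasurable,
        Measure.bind_apply (hB0.inter hU.compl) P.measurable.aemeasurable,
        Measure.bind_apply (hB1.inter hU) P.measurable.aemeasurable]
    rw [hdec, h1i, h2i, h3, ← mul_assoc ((δ:ℝ≥0∞)/2), mul_assoc ((δ:ℝ≥0∞)/2)]
    rw [← htot, ← harith]
  · have h0 : Measurable (fun x : X => (x, false)) := measurable_id.prodMk measurable_const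
    have h1 : Measurable (fun x : X => (x, true)) := measurable_id.prodMk measurable_const
    rw [splitMeasure, Measure.map_add _ _ measurable_fst, Measure.map_add _ _ measurable_fst,
      Measure.map_smul, Measure.map_smul,
      Measure.map_map measurable_fst h0, Measure.map_map measurable_fst h0,
      Measure.map_map measurable_fst h1]
    have : (Prod.fst ∘ fun x : X => (x, false)) = id := rfl
    rw [this]
    have : (Prod.fst ∘ fun x : X => (x, true)) = id := rfl
    rw [this, Measure.map_id, Measure.map_id]
    have hre : (1 - δ/2) • lam.restrict U + lam.restrict Uᶜ + (δ/2) • lam.restrict U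
        = ((1 - δ/2) + δ/2) • lam.restrict U + lam.restrict Uᶜ := by
      rw [add_smul]; abel
    rw [hre, tsub_add_cancel_of_le hd1, one_smul, Measure.restrict_add_restrict_compl hU]
end

section
/- Let P be a Markov transition kernel on (X, 𝓑) and B ∈ 𝓑, with taboo probabilities ₍B₎P^n defined inductively by ₍B₎P¹ = P and ₍B₎P^{n+1}(x, A) = ∫_{B^c} ₍B₎P^n(x, dy) P(y, A). Then the first-entrance–last-exit (regenerative) decomposition holds: for all x ∈ X, A ∈ 𝓑, and n ≥ 1, P^n(x, A) = ₍B₎P^n(x, A) + Σ_{j=1}^{n−1} Σ_{k=1}^{j} ∫_B ∫_B ₍B₎P^k(x, dv) P^{j−k}(v, dw) ₍B₎P^{n−j}(w, A), where P^0(v, ·) := δ_v. -/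
/-!
Statement 13 (first-entrance–last-exit / regenerative decomposition): for a Markov kernel
`P`, a set `B`, and the taboo kernels `₍B₎Pⁿ` (`₍B₎P¹ = P`,
`₍B₎P^{n+1}(x,A) = ∫_{Bᶜ} ₍B₎Pⁿ(x,dy) P(y,A)`), one has for all `x`, measurable `A`, `n ≥ 1`:
`Pⁿ(x,A) = ₍B₎Pⁿ(x,A) + Σ_{j=1}^{n-1} Σ_{k=1}^{j} ∫_B ∫_B ₍B₎Pᵏ(x,dv) P^{j-k}(v,dw)
₍B₎P^{n-j}(w,A)`, where `P⁰(v,·) = δ_v`.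
-/

open MeasureTheory ProbabilityTheory ENNReal Finset

/-- The `n`-step transition kernel `P^n` (with `P⁰ = id`, i.e. `P⁰(x,·) = δ_x`). -/
noncomputable def nstep {X : Type*} [MeasurableSpace X] (P : Kernel X X) : ℕ → Kernel X X
  | 0 => Kernel.id
  | n + 1 => P ∘ₖ nstep P n

/-- The taboo kernels `₍B₎Pⁿ`. -/
noncomputable def tabooKernel {X : Type*} [MeasurableSpace X] (P : Kernel X X) {B : Set X}
    (hB : MeasurableSet B) : ℕ → Kernel X X
  | 0 => Kernel.id
  | 1 => P
  | n + 2 => P ∘ₖ (tabooKernel P hB (n + 1)).restrict hB.compl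

section Aux

set_option linter.unusedSectionVars false

variable {X : Type*} [MeasurableSpace X] (P : Kernel X X) [IsMarkovKernel P]
    {B : Set X} (hB : MeasurableSet B)

instance nstep.instIsMarkovKernel : ∀ n, IsMarkovKernel (nstep P n)
  | 0 => by rw [nstep]; infer_instance
  | n + 1 => by have := nstep.instIsMarkovKernel n; rw [nstep]; infer_instance

instance tabooKernel.instIsFiniteKernel : ∀ n, IsFiniteKernel (tabooKernel P hB n)
  | 0 => by rw [tabooKernel]; infer_instance
  | 1 => by rw [tabooKernel]; infer_instance
  | n + 2 => by
      have := tabooKernel.instIsFiniteKernel (n + 1)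
      rw [tabooKernel]; infer_instance

lemma lintegral_nstep_succ (n : ℕ) (x : X) {g : X → ℝ≥0∞} (hg : Measurable g) :
    ∫⁻ w, g w ∂(nstep P (n + 1) x) = ∫⁻ y, ∫⁻ w, g w ∂(P y) ∂(nstep P n x) := by
  rw [show nstep P (n + 1) = P ∘ₖ nstep P n from rfl, Kernel.lintegral_comp _ _ _ hg]

lemma lintegral_nstep_one (x : X) {g : X → ℝ≥0∞} (hg : Measurable g) :
    ∫⁻ w, g w ∂(nstep P 1 x) = ∫⁻ w, g w ∂(P x) := by
  rw [lintegral_nstep_succ P 0 x hg, show nstep P 0 = Kernel.id from rfl, Kernel.id_apply,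
    lintegral_dirac' _ (Measurable.lintegral_kernel hg)]

lemma lintegral_taboo_succ {r : ℕ} (hr : 1 ≤ r) (u : X) {g : X → ℝ≥0∞} (hg : Measurable g) :
    ∫⁻ w, g w ∂(tabooKernel P hB (r + 1) u)
      = ∫⁻ y in Bᶜ, ∫⁻ w, g w ∂(P y) ∂(tabooKernel P hB r u) := by
  obtain ⟨m, rfl⟩ := Nat.exists_eq_add_of_le hr
  rw [show tabooKernel P hB (1 + m + 1) = P ∘ₖ (tabooKernel P hB (1 + m)).restrict hB.compl by
        rw [Nat.add_comm 1 m]; rfl,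
      Kernel.lintegral_comp _ _ _ hg, Kernel.restrict_apply]

/-- First-entrance decomposition. -/
lemma first_entrance {n : ℕ} (hn : 1 ≤ n) :
    ∀ (x : X) {g : X → ℝ≥0∞}, Measurable g →
      ∫⁻ w, g w ∂(nstep P n x)
        = ∫⁻ w, g w ∂(tabooKernel P hB n x)
          + ∑ k ∈ Finset.Icc 1 (n - 1),
              ∫⁻ v in B, (∫⁻ w, g w ∂(nstep P (n - k) v)) ∂(tabooKernel P hB k x) := by
  induction n, hn using Nat.le_induction with
  | base =>
    intro x g hg
    simp only [Nat.sub_self, Finset.Icc_eq_empty_of_lt Nat.zero_lt_one, Finset.sum_empty, add_zero]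
    rw [lintegral_nstep_one P x hg]; rfl
  | succ n hn ih =>
    intro x g hg
    obtain ⟨m, rfl⟩ := Nat.exists_eq_add_of_le' hn
    set φ : X → ℝ≥0∞ := fun y => ∫⁻ w, g w ∂(P y) with hφdef
    have hφ : Measurable φ := Measurable.lintegral_kernel hg
    rw [lintegral_nstep_succ P _ x hg, ih x hφ]
    have hsplit : ∫⁻ y, φ y ∂(tabooKernel P hB (m + 1) x)
        = ∫⁻ y in Bᶜ, φ y ∂(tabooKernel P hB (m + 1) x)
          + ∫⁻ y in B, φ y ∂(tabooKernel P hB (m + 1) x) :=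
      (lintegral_add_compl φ hB).symm.trans (add_comm _ _)
    rw [hsplit]
    have h1 : ∫⁻ y in Bᶜ, φ y ∂(tabooKernel P hB (m + 1) x)
        = ∫⁻ w, g w ∂(tabooKernel P hB (m + 1 + 1) x) :=
      (lintegral_taboo_succ P hB (Nat.le_add_left 1 m) x hg).symm
    have h3 : ∀ k ∈ Finset.Icc 1 (m + 1 - 1),
        (∫⁻ v in B, (∫⁻ w, φ w ∂(nstep P (m + 1 - k) v)) ∂(tabooKernel P hB k x))
          = ∫⁻ v in B, (∫⁻ w, g w ∂(nstep P (m + 1 + 1 - k) v)) ∂(tabooKernel P hB k x) := by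
      intro k hk
      simp only [Finset.mem_Icc] at hk
      refine lintegral_congr fun v => ?_
      rw [show m + 1 + 1 - k = (m + 1 - k) + 1 by omega, lintegral_nstep_succ P _ v hg]
    rw [Finset.sum_congr rfl h3, h1]
    rw [show m + 1 + 1 - 1 = (m + 1 - 1) + 1 by omega,
      Finset.sum_Icc_succ_top (by omega : 1 ≤ m + 1 - 1 + 1)]
    rw [show m + 1 - 1 + 1 = m + 1 by omega]
    have h4 : ∫⁻ y in B, φ y ∂(tabooKernel P hB (m + 1) x)
        = ∫⁻ v in B, (∫⁻ w, g w ∂(nstep P (m + 1 + 1 - (m + 1)) v))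
            ∂(tabooKernel P hB (m + 1) x) := by
      refine lintegral_congr fun v => ?_
      rw [show m + 1 + 1 - (m + 1) = 1 by omega, lintegral_nstep_one P v hg]
    rw [h4]; ring

/-- Last-exit decomposition. -/
lemma last_exit {n : ℕ} (hn : 1 ≤ n) :
    ∀ (v : X) {g : X → ℝ≥0∞}, Measurable g →
      ∫⁻ w, g w ∂(nstep P n v)
        = ∫⁻ w, g w ∂(tabooKernel P hB n v)
          + ∑ i ∈ Finset.Icc 1 (n - 1),
              ∫⁻ u in B, (∫⁻ w, g w ∂(tabooKernel P hB (n - i) u)) ∂(nstep P i v) := by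
  induction n, hn using Nat.le_induction with
  | base =>
    intro v g hg
    simp only [Nat.sub_self, Finset.Icc_eq_empty_of_lt Nat.zero_lt_one, Finset.sum_empty, add_zero]
    rw [lintegral_nstep_one P v hg]; rfl
  | succ n hn ih =>
    intro v g hg
    obtain ⟨m, rfl⟩ := Nat.exists_eq_add_of_le' hn
    set φ : X → ℝ≥0∞ := fun y => ∫⁻ w, g w ∂(P y) with hφdef
    have hφ : Measurable φ := Measurable.lintegral_kernel hg
    set ψ : X → ℝ≥0∞ := Bᶜ.indicator φ with hψdef
    have hψ : Measurable ψ := hφ.indicator hB.compl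
    have hψint : ∀ (μ : Measure X), ∫⁻ y, ψ y ∂μ = ∫⁻ y in Bᶜ, φ y ∂μ := fun μ =>
      lintegral_indicator hB.compl φ
    rw [lintegral_nstep_succ P _ v hg]
    have hsplit : ∫⁻ y, φ y ∂(nstep P (m + 1) v)
        = ∫⁻ y, ψ y ∂(nstep P (m + 1) v) + ∫⁻ y in B, φ y ∂(nstep P (m + 1) v) := by
      rw [hψint]
      exact (lintegral_add_compl φ hB).symm.trans (add_comm _ _)
    rw [hsplit, ih v hψ]
    have h1 : ∫⁻ w, ψ w ∂(tabooKernel P hB (m + 1) v)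
        = ∫⁻ w, g w ∂(tabooKernel P hB (m + 1 + 1) v) := by
      rw [hψint, ← lintegral_taboo_succ P hB (Nat.le_add_left 1 m) v hg]
    have h3 : ∀ i ∈ Finset.Icc 1 (m + 1 - 1),
        (∫⁻ u in B, (∫⁻ w, ψ w ∂(tabooKernel P hB (m + 1 - i) u)) ∂(nstep P i v))
          = ∫⁻ u in B, (∫⁻ w, g w ∂(tabooKernel P hB (m + 1 + 1 - i) u)) ∂(nstep P i v) := by
      intro i hi
      simp only [Finset.mem_Icc] at hi
      refine lintegral_congr fun u => ?_
      rw [hψint, show m + 1 + 1 - i = (m + 1 - i) + 1 by omega,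
        lintegral_taboo_succ P hB (by omega) u hg]
    rw [Finset.sum_congr rfl h3, h1]
    rw [show m + 1 + 1 - 1 = (m + 1 - 1) + 1 by omega,
      Finset.sum_Icc_succ_top (by omega : 1 ≤ m + 1 - 1 + 1),
      show m + 1 - 1 + 1 = m + 1 by omega]
    have h4 : ∫⁻ y in B, φ y ∂(nstep P (m + 1) v)
        = ∫⁻ u in B, (∫⁻ w, g w ∂(tabooKernel P hB (m + 1 + 1 - (m + 1)) u))
            ∂(nstep P (m + 1) v) := by
      refine lintegral_congr fun u => ?_
      rw [show m + 1 + 1 - (m + 1) = 1 by omega]; rfl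
    rw [h4]; ring

end Aux

theorem regenerative_decomposition
    {X : Type*} [MeasurableSpace X] (P : Kernel X X) [IsMarkovKernel P]
    {B : Set X} (hB : MeasurableSet B)
    (x : X) (A : Set X) (hA : MeasurableSet A) (n : ℕ) (hn : 1 ≤ n) :
    nstep P n x A
      = tabooKernel P hB n x A
        + ∑ j ∈ Finset.Icc 1 (n - 1), ∑ k ∈ Finset.Icc 1 j,
            ∫⁻ v in B, ∫⁻ w in B,
              tabooKernel P hB (n - j) w A ∂(nstep P (j - k) v) ∂(tabooKernel P hB k x) := by
  classical
  set g : X → ℝ≥0∞ := A.indicator 1 with hgdef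
  have hg : Measurable g := measurable_one.indicator hA
  have hgint : ∀ (μ : Measure X), ∫⁻ w, g w ∂μ = μ A := fun μ => lintegral_indicator_one hA
  -- rewrite using first-entrance
  have hFE := first_entrance P hB hn x hg
  simp only [hgint] at hFE
  rw [hFE]
  congr 1
  -- expand each summand using last-exit
  have hinner : ∀ k ∈ Finset.Icc 1 (n - 1),
      (∫⁻ v in B, nstep P (n - k) v A ∂(tabooKernel P hB k x))
        = (∫⁻ v in B, tabooKernel P hB (n - k) v A ∂(tabooKernel P hB k x))
          + ∑ i ∈ Finset.Icc 1 (n - k - 1),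
              ∫⁻ v in B, (∫⁻ u in B, tabooKernel P hB (n - k - i) u A ∂(nstep P i v))
                ∂(tabooKernel P hB k x) := by
    intro k hk
    simp only [Finset.mem_Icc] at hk
    have hLE : ∀ v : X, nstep P (n - k) v A
        = tabooKernel P hB (n - k) v A
          + ∑ i ∈ Finset.Icc 1 (n - k - 1),
              ∫⁻ u in B, tabooKernel P hB (n - k - i) u A ∂(nstep P i v) := by
      intro v
      have h := last_exit P hB (by omega : 1 ≤ n - k) v hg
      simp only [hgint] at h
      exact h
    calc (∫⁻ v in B, nstep P (n - k) v A ∂(tabooKernel P hB k x))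
        = ∫⁻ v in B, (tabooKernel P hB (n - k) v A
            + ∑ i ∈ Finset.Icc 1 (n - k - 1),
                ∫⁻ u in B, tabooKernel P hB (n - k - i) u A ∂(nstep P i v))
              ∂(tabooKernel P hB k x) := lintegral_congr fun v => hLE v
      _ = (∫⁻ v in B, tabooKernel P hB (n - k) v A ∂(tabooKernel P hB k x))
            + ∫⁻ v in B, (∑ i ∈ Finset.Icc 1 (n - k - 1),
                ∫⁻ u in B, tabooKernel P hB (n - k - i) u A ∂(nstep P i v))
              ∂(tabooKernel P hB k x) := by
          rw [lintegral_add_left (Kernel.measurable_coe _ hA)]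
      _ = _ := by
          congr 1
          rw [lintegral_finset_sum']
          intro i hi
          exact (Measurable.setLIntegral_kernel (Kernel.measurable_coe _ hA) hB).aemeasurable
  rw [Finset.sum_congr rfl hinner]
  -- now massage the target double sum
  rw [Finset.sum_comm'
    (s' := fun k => Finset.Icc k (n - 1)) (t' := Finset.Icc 1 (n - 1))
    (fun j k => by simp only [Finset.mem_Icc]; omega)]
  refine (Finset.sum_congr rfl fun k hk => ?_).symm
  simp only [Finset.mem_Icc] at hk
  -- split off j = k term
  rw [show Finset.Icc k (n - 1) = insert k (Finset.Icc (k + 1) (n - 1)) by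
        ext j; simp only [Finset.mem_Icc, Finset.mem_insert]; omega,
    Finset.sum_insert (by simp only [Finset.mem_Icc]; omega)]
  congr 1
  · -- j = k term: uses nstep 0 = dirac
    rw [Nat.sub_self]
    refine setLIntegral_congr_fun hB (fun v hv => ?_)
    rw [show nstep P 0 = Kernel.id from rfl, Kernel.id_apply,
      setLIntegral_dirac' (Kernel.measurable_coe _ hA) hB, if_pos hv]
  · -- j > k terms: reindex
    rw [show Finset.Icc (k + 1) (n - 1) = Finset.Ico (k + 1) (n - 1 + 1) by
          rw [Finset.Ico_add_one_right_eq_Icc],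
      Finset.sum_Ico_eq_sum_range,
      show Finset.Icc 1 (n - k - 1) = Finset.Ico 1 (n - k - 1 + 1) by rw [Finset.Ico_add_one_right_eq_Icc],
      Finset.sum_Ico_eq_sum_range,
      show n - 1 + 1 - (k + 1) = n - k - 1 + 1 - 1 by omega]
    refine Finset.sum_congr rfl fun i hi => ?_
    rw [show n - (k + 1 + i) = n - k - (1 + i) by omega,
      show k + 1 + i - k = 1 + i by omega]
end

section
/- Let P be a Markov transition kernel on (X, 𝓑) and let α ∈ 𝓑 be a nonempty atom for P, i.e., there is a probability measure ν with P(x, ·) = ν for all x ∈ α; write P^m(α, ·) and ₍α₎P^m(α, ·) for the common values of P^m(x, ·) and ₍α₎P^m(x, ·) over x ∈ α, with P^0(α, α) := 1. Then for all x ∈ X, A ∈ 𝓑, and n ≥ 1, P^n(x, A) = ₍α₎P^n(x, A) + Σ_{j=1}^{n−1} Σ_{k=1}^{j} ₍α₎P^k(x, α) · P^{j−k}(α, α) · ₍α₎P^{n−j}(α, A). -/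
/-!
Statement 14 (regenerative decomposition at an atom): if `α` is a nonempty atom for `P`
(i.e. `P(x,·) = ν` for every `x ∈ α`), then, writing `Pᵐ(α,·)` and `₍α₎Pᵐ(α,·)` for the
common values of `Pᵐ(x,·)` and `₍α₎Pᵐ(x,·)` over `x ∈ α` (represented by any point
`x₀ ∈ α`, with `P⁰(α,α) = 1` since `P⁰(x₀,·) = δ_{x₀}`), one has for all `x`, measurable
`A`, and `n ≥ 1`:
`Pⁿ(x,A) = ₍α₎Pⁿ(x,A) + Σ_{j=1}^{n-1} Σ_{k=1}^{j} ₍α₎Pᵏ(x,α) · P^{j-k}(α,α) · ₍α₎P^{n-j}(α,A)`.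
-/

open MeasureTheory ProbabilityTheory ENNReal Finset

section Aux

variable {X : Type*} [MeasurableSpace X] (P : Kernel X X) [IsMarkovKernel P]
  {α : Set X} (hα : MeasurableSet α)

lemma nstep_succ_apply (n : ℕ) (z : X) {A : Set X} (hA : MeasurableSet A) :
    nstep P (n + 1) z A = ∫⁻ y, P y A ∂(nstep P n z) := by
  rw [show nstep P (n + 1) = P ∘ₖ nstep P n from rfl, Kernel.comp_apply' _ _ _ hA]

lemma nstep_one_apply (z : X) : nstep P 1 z = P z := by
  rw [show nstep P 1 = P ∘ₖ Kernel.id from rfl, Kernel.comp_id]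

lemma taboo_one : tabooKernel P hα 1 = P := rfl

variable (hatom : ∃ ν : Measure X, ∀ x ∈ α, P x = ν) (x₀ : X) (hx₀ : x₀ ∈ α)

include hatom hx₀

lemma atom_apply {y : X} (hy : y ∈ α) : P y = P x₀ := by
  obtain ⟨ν, hν⟩ := hatom; rw [hν y hy, hν x₀ hx₀]

/-- Key step: integrating `P(·, A)` against a taboo measure. -/
lemma taboo_key (m : ℕ) (hm : 1 ≤ m) (z : X) {A : Set X} (hA : MeasurableSet A) :
    ∫⁻ y, P y A ∂(tabooKernel P hα m z)
      = tabooKernel P hα m z α * P x₀ A + tabooKernel P hα (m + 1) z A := by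
  obtain ⟨k, rfl⟩ : ∃ k, m = k + 1 := ⟨m - 1, by omega⟩
  have h1 : tabooKernel P hα (k + 1 + 1) z A
      = ∫⁻ y in αᶜ, P y A ∂(tabooKernel P hα (k + 1) z) := by
    rw [show tabooKernel P hα (k + 1 + 1)
        = P ∘ₖ (tabooKernel P hα (k + 1)).restrict hα.compl from rfl,
      Kernel.comp_apply' _ _ _ hA, Kernel.restrict_apply]
  have h2 : ∫⁻ y in α, P y A ∂(tabooKernel P hα (k + 1) z)
      = P x₀ A * tabooKernel P hα (k + 1) z α := by
    rw [setLIntegral_congr_fun hα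
        (fun y hy => by rw [atom_apply P hatom x₀ hx₀ hy]),
      setLIntegral_const]
  rw [← lintegral_add_compl _ hα, h1, h2, mul_comm]

/-- First-entrance decomposition. -/
lemma first_entrance_s14 (n : ℕ) (hn : 1 ≤ n) (x : X) :
    ∀ {A : Set X}, MeasurableSet A →
      nstep P n x A = tabooKernel P hα n x A
        + ∑ k ∈ Icc 1 (n - 1), tabooKernel P hα k x α * nstep P (n - k) x₀ A := by
  induction n, hn using Nat.le_induction with
  | base =>
    intro A hA
    simp [nstep_one_apply, taboo_one]
  | succ n hn ih =>
    intro A hA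
    obtain ⟨m, rfl⟩ : ∃ m, n = m + 1 := ⟨n - 1, by omega⟩
    have hμ : nstep P (m + 1) x = tabooKernel P hα (m + 1) x
        + ∑ k ∈ Icc 1 m, tabooKernel P hα k x α • nstep P (m + 1 - k) x₀ := by
      ext s hs
      have := ih hs
      simpa [Measure.finset_sum_apply] using this
    rw [nstep_succ_apply P (m + 1) x hA, hμ, lintegral_add_measure,
      lintegral_finset_sum_measure]
    simp only [lintegral_smul_measure, smul_eq_mul]
    rw [taboo_key P hα hatom x₀ hx₀ (m + 1) (by omega) x hA]
    have hsum : ∀ k ∈ Icc 1 m,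
        tabooKernel P hα k x α * ∫⁻ y, P y A ∂(nstep P (m + 1 - k) x₀)
          = tabooKernel P hα k x α * nstep P (m + 2 - k) x₀ A := by
      intro k hk
      have hk' : k ≤ m := (mem_Icc.mp hk).2
      rw [show m + 2 - k = (m + 1 - k) + 1 by omega, nstep_succ_apply P _ x₀ hA]
    rw [Finset.sum_congr rfl hsum,
      show m + 1 + 1 - 1 = m + 1 from rfl,
      Finset.sum_Icc_succ_top (by omega : 1 ≤ m + 1)]
    have hlast : nstep P (m + 1 + 1 - (m + 1)) x₀ A = P x₀ A := by
      rw [show m + 1 + 1 - (m + 1) = 1 by omega, nstep_one_apply]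
    have hrest : ∀ k ∈ Icc 1 m,
        tabooKernel P hα k x α * nstep P (m + 1 + 1 - k) x₀ A
          = tabooKernel P hα k x α * nstep P (m + 2 - k) x₀ A := by
      intro k hk; rw [show m + 1 + 1 - k = m + 2 - k by omega]
    rw [Finset.sum_congr rfl hrest, hlast]
    ring

/-- Last-exit decomposition. -/
lemma last_exit_s14 (n : ℕ) (hn : 1 ≤ n) (x : X) :
    ∀ {A : Set X}, MeasurableSet A →
      nstep P n x A = tabooKernel P hα n x A
        + ∑ j ∈ Icc 1 (n - 1), nstep P j x α * tabooKernel P hα (n - j) x₀ A := by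
  induction n, hn using Nat.le_induction with
  | base =>
    intro A hA
    simp [nstep_one_apply, taboo_one]
  | succ n hn ih =>
    intro A hA
    obtain ⟨m, rfl⟩ : ∃ m, n = m + 1 := ⟨n - 1, by omega⟩
    have hμ : nstep P (m + 1) x = tabooKernel P hα (m + 1) x
        + ∑ j ∈ Icc 1 m, nstep P j x α • tabooKernel P hα (m + 1 - j) x₀ := by
      ext s hs
      have := ih hs
      simpa [Measure.finset_sum_apply] using this
    rw [nstep_succ_apply P (m + 1) x hA, hμ, lintegral_add_measure,
      lintegral_finset_sum_measure]
    simp only [lintegral_smul_measure, smul_eq_mul]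
    rw [taboo_key P hα hatom x₀ hx₀ (m + 1) (by omega) x hA]
    have hsum : ∀ j ∈ Icc 1 m,
        nstep P j x α * ∫⁻ y, P y A ∂(tabooKernel P hα (m + 1 - j) x₀)
          = nstep P j x α * (tabooKernel P hα (m + 1 - j) x₀ α * P x₀ A
              + tabooKernel P hα (m + 2 - j) x₀ A) := by
      intro j hj
      have hj' : j ≤ m := (mem_Icc.mp hj).2
      rw [taboo_key P hα hatom x₀ hx₀ (m + 1 - j) (by omega) x₀ hA,
        show m + 1 - j + 1 = m + 2 - j by omega]
    rw [Finset.sum_congr rfl hsum]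
    -- Target sum
    rw [show m + 1 + 1 - 1 = m + 1 from rfl,
      Finset.sum_Icc_succ_top (by omega : 1 ≤ m + 1)]
    have hlast : tabooKernel P hα (m + 1 + 1 - (m + 1)) x₀ A = P x₀ A := by
      rw [show m + 1 + 1 - (m + 1) = 1 by omega, taboo_one]
    have hrest : ∀ j ∈ Icc 1 m,
        nstep P j x α * tabooKernel P hα (m + 1 + 1 - j) x₀ A
          = nstep P j x α * tabooKernel P hα (m + 2 - j) x₀ A := by
      intro j hj; rw [show m + 1 + 1 - j = m + 2 - j by omega]
    rw [Finset.sum_congr rfl hrest, hlast]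
    -- use IH at α to rewrite nstep (m+1) x α
    have hIH : nstep P (m + 1) x α = tabooKernel P hα (m + 1) x α
        + ∑ j ∈ Icc 1 m, nstep P j x α * tabooKernel P hα (m + 1 - j) x₀ α := by
      simpa using ih hα
    rw [hIH]
    simp only [mul_add, add_mul, Finset.sum_add_distrib, Finset.mul_sum, Finset.sum_mul]
    ring_nf

end Aux

theorem regenerative_decomposition_at_atom
    {X : Type*} [MeasurableSpace X] (P : Kernel X X) [IsMarkovKernel P]
    {α : Set X} (hα : MeasurableSet α)
    (hatom : ∃ ν : Measure X, ∀ x ∈ α, P x = ν)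
    (x₀ : X) (hx₀ : x₀ ∈ α)
    (x : X) (A : Set X) (hA : MeasurableSet A) (n : ℕ) (hn : 1 ≤ n) :
    nstep P n x A
      = tabooKernel P hα n x A
        + ∑ j ∈ Finset.Icc 1 (n - 1), ∑ k ∈ Finset.Icc 1 j,
            tabooKernel P hα k x α * nstep P (j - k) x₀ α
              * tabooKernel P hα (n - j) x₀ A := by
  rw [last_exit_s14 P hα hatom x₀ hx₀ n hn x hA]
  congr 1
  refine Finset.sum_congr rfl fun j hj => ?_
  obtain ⟨hj1, hj2⟩ := mem_Icc.mp hj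
  have hfe : nstep P j x α = ∑ k ∈ Icc 1 j,
      tabooKernel P hα k x α * nstep P (j - k) x₀ α := by
    obtain ⟨m, rfl⟩ : ∃ m, j = m + 1 := ⟨j - 1, by omega⟩
    rw [Finset.sum_Icc_succ_top (by omega : 1 ≤ m + 1),
      first_entrance_s14 P hα hatom x₀ hx₀ (m + 1) (by omega) x hα]
    have h0 : nstep P (m + 1 - (m + 1)) x₀ α = 1 := by
      rw [show m + 1 - (m + 1) = 0 by omega,
        show nstep P 0 = Kernel.id from rfl, Kernel.id_apply,
        Measure.dirac_apply_of_mem hx₀]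
    rw [h0, mul_one, show m + 1 - 1 = m from rfl]
    ring
  rw [hfe, Finset.sum_mul]
end

section
/- Let P be a Markov transition kernel on (X, 𝓑) with nonempty atom α ∈ 𝓑, let π be an invariant probability measure for P with π(α) > 0, and let g : X → [0, ∞) be measurable with π(g) < ∞. Define a_x(n) := ₍α₎P^n(x, α), u(n) := P^n(α, α) for n ≥ 1 with u(0) := 1, and t_g(n) := ₍α₎P^n(α, g) := ∫ ₍α₎P^n(α, dy) g(y). Assume the representation π(g) = π(α) Σ_{k=1}^∞ t_g(k) holds. Then for every x ∈ X and every n ≥ 1, |P^n(x, g) − π(g)| ≤ ₍α₎P^n(x, g) + Σ_{m=0}^{n−1} |(a_x * u)(m) − π(α)| · t_g(n−m) + π(α) Σ_{k=n+1}^∞ t_g(k), where (a_x * u)(m) := Σ_{i=1}^{m} a_x(i) u(m−i) for m ≥ 1 and (a_x * u)(0) := 0. -/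
/-!
Statement 15: let `α` be a nonempty atom for `P`, `π` an invariant probability measure with
`π(α) > 0`, and `g : X → [0,∞)` with `π(g) < ∞`. With `a_x(n) = ₍α₎Pⁿ(x,α)`,
`u(n) = Pⁿ(α,α)` (`u(0) = 1`), `t_g(n) = ₍α₎Pⁿ(α,g)`, and assuming the representation
`π(g) = π(α) Σ_{k≥1} t_g(k)`, one has for all `x` and `n ≥ 1`:
`|Pⁿ(x,g) - π(g)| ≤ ₍α₎Pⁿ(x,g) + Σ_{m=0}^{n-1} |(a_x*u)(m) - π(α)| t_g(n-m)
  + π(α) Σ_{k≥n+1} t_g(k)`,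
with `(a_x*u)(m) = Σ_{i=1}^m a_x(i) u(m-i)` and `(a_x*u)(0) = 0`.

All quantities are valued in `[0,∞]`; `|a - b|` is `eabs a b = max (a - b) (b - a)` with
truncated subtraction (the usual absolute difference for finite values). The common values
`Pᵐ(α,·)`, `₍α₎Pᵐ(α,·)` over the atom are represented by a point `x₀ ∈ α`; note
`u(0) = P⁰(x₀, α) = δ_{x₀}(α) = 1`.
-/

open MeasureTheory ProbabilityTheory ENNReal Finset

/-- Absolute difference in `[0,∞]`. -/
noncomputable def eabs (a b : ℝ≥0∞) : ℝ≥0∞ := max (a - b) (b - a)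

set_option linter.unusedSectionVars false
set_option maxHeartbeats 2000000

namespace RegenAux
open MeasureTheory ProbabilityTheory ENNReal Finset

section
variable {X : Type*} [MeasurableSpace X] (P : Kernel X X) [IsMarkovKernel P]
  {α : Set X} (hα : MeasurableSet α)

lemma nstep_one : nstep P 1 = P := by
  show P ∘ₖ Kernel.id = P
  simp [Kernel.comp_id]

lemma nstep_succ_apply (n : ℕ) (x : X) : nstep P (n+1) x = (nstep P n x).bind P := by
  show (P ∘ₖ nstep P n) x = _
  rw [Kernel.comp_apply]

lemma taboo_one : tabooKernel P hα 1 = P := rfl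

lemma taboo_succ_apply (n : ℕ) (hn : 1 ≤ n) (x : X) :
    tabooKernel P hα (n+1) x = ((tabooKernel P hα n x).restrict αᶜ).bind P := by
  cases n with
  | zero => omega
  | succ m =>
    show (P ∘ₖ (tabooKernel P hα (m+1)).restrict hα.compl) x = _
    rw [Kernel.comp_apply, Kernel.restrict_apply]

lemma bind_add_meas {μ ν : Measure X} {f : X → Measure X} (hf : Measurable f) :
    (μ + ν).bind f = μ.bind f + ν.bind f := by
  ext s hs
  simp [Measure.bind_apply hs hf.aemeasurable, lintegral_add_measure]

lemma bind_smul_meas (c : ℝ≥0∞) {μ : Measure X} {f : X → Measure X} (hf : Measurable f) :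
    (c • μ).bind f = c • μ.bind f := by
  ext s hs
  simp [Measure.bind_apply hs hf.aemeasurable, lintegral_smul_measure]

lemma bind_fsum {ι : Type*} (s : Finset ι) (μ : ι → Measure X) {f : X → Measure X}
    (hf : Measurable f) : (∑ i ∈ s, μ i).bind f = ∑ i ∈ s, (μ i).bind f := by
  classical
  induction s using Finset.induction_on with
  | empty => simp
  | insert _ _ h ih =>
    rw [Finset.sum_insert h, Finset.sum_insert h, ← ih]
    ext t ht
    simp [Measure.bind_apply ht hf.aemeasurable, lintegral_add_measure]

variable (x₀ : X) (hx₀ : x₀ ∈ α) (hatom : ∀ x ∈ α, P x = P x₀)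

include hα hx₀ hatom in
lemma bind_restrict_atom (μ : Measure X) :
    (μ.restrict α).bind P = (μ α) • P x₀ := by
  ext s hs
  rw [Measure.bind_apply hs P.measurable.aemeasurable]
  rw [setLIntegral_congr_fun hα (fun y hy => by rw [hatom y hy])]
  simp [lintegral_const, Measure.restrict_apply_univ, mul_comm]

include hα hx₀ hatom in
lemma taboo_bind (k : ℕ) (hk : 1 ≤ k) (x : X) :
    (tabooKernel P hα k x).bind P
      = tabooKernel P hα (k+1) x + (tabooKernel P hα k x α) • P x₀ := by
  have hsplit : tabooKernel P hα k x
      = (tabooKernel P hα k x).restrict αᶜ + (tabooKernel P hα k x).restrict α := by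
    rw [add_comm, Measure.restrict_add_restrict_compl hα]
  conv_lhs => rw [hsplit]
  rw [bind_add_meas P.measurable, ← taboo_succ_apply P hα k hk,
    bind_restrict_atom P hα x₀ hx₀ hatom]

include hα hx₀ hatom in
lemma main_decomp : ∀ n, 1 ≤ n → ∀ x : X,
    nstep P n x = tabooKernel P hα n x
      + ∑ m ∈ Icc 1 (n-1), (nstep P m x α) • tabooKernel P hα (n-m) x₀ := by
  intro n hn
  induction n, hn using Nat.le_induction with
  | base =>
    intro x
    simp [nstep_one, taboo_one]
  | succ n hn ih =>
    intro x
    have hIcc : Icc 1 (n+1-1) = insert n (Icc 1 (n-1)) := by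
      ext m; simp only [Finset.mem_Icc, Finset.mem_insert]; omega
    have hnotmem : n ∉ Icc 1 (n-1) := by simp [Finset.mem_Icc]; omega
    rw [nstep_succ_apply, ih x, bind_add_meas P.measurable,
      bind_fsum _ _ P.measurable, taboo_bind P hα x₀ hx₀ hatom n hn x]
    have hterm : ∀ m ∈ Icc 1 (n-1),
        ((nstep P m x α) • tabooKernel P hα (n-m) x₀).bind P
          = (nstep P m x α) • tabooKernel P hα (n+1-m) x₀
            + ((nstep P m x α) * tabooKernel P hα (n-m) x₀ α) • P x₀ := by
      intro m hm
      simp only [Finset.mem_Icc] at hm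
      have h1 : 1 ≤ n - m := by omega
      rw [bind_smul_meas _ P.measurable, taboo_bind P hα x₀ hx₀ hatom (n-m) h1 x₀,
        smul_add, smul_smul]
      have : n - m + 1 = n + 1 - m := by omega
      rw [this]
    rw [Finset.sum_congr rfl hterm, Finset.sum_add_distrib, ← Finset.sum_smul]
    have hIH : nstep P n x α = tabooKernel P hα n x α
        + ∑ m ∈ Icc 1 (n-1), (nstep P m x α) * tabooKernel P hα (n-m) x₀ α := by
      rw [ih x]
      simp [Measure.finset_sum_apply]
    rw [hIcc, Finset.sum_insert hnotmem]
    have hPx₀ : P x₀ = tabooKernel P hα (n+1-n) x₀ := by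
      have : n + 1 - n = 1 := by omega
      rw [this, taboo_one]
    rw [hPx₀] at *
    rw [hIH, add_smul]
    abel

end

lemma conv_unique (a t u b : ℕ → ℝ≥0∞) (hu0 : u 0 = 1)
    (hu : ∀ k, 1 ≤ k → u k = t k + ∑ j ∈ Icc 1 (k-1), u j * t (k-j))
    (hb : ∀ m, 1 ≤ m → b m = a m + ∑ j ∈ Icc 1 (m-1), b j * t (m-j)) :
    ∀ m, 1 ≤ m → b m = ∑ i ∈ Icc 1 m, a i * u (m-i) := by
  intro m
  induction m using Nat.strong_induction_on with
  | _ m IH =>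
    intro hm
    rw [hb m hm]
    have step1 : ∀ j ∈ Icc 1 (m-1), b j * t (m-j)
        = ∑ i ∈ Icc 1 j, a i * (u (j-i) * t (m-j)) := by
      intro j hj
      simp only [mem_Icc] at hj
      rw [IH j (by omega) hj.1, Finset.sum_mul]
      exact Finset.sum_congr rfl fun i _ => by ring
    rw [Finset.sum_congr rfl step1]
    rw [Finset.sum_comm' (t' := Icc 1 (m-1)) (s' := fun i => Icc i (m-1))
      (by intro j i; simp only [mem_Icc]; omega)]
    have step2 : ∀ i ∈ Icc 1 (m-1),
        (∑ j ∈ Icc i (m-1), a i * (u (j-i) * t (m-j))) = a i * u (m-i) := by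
      intro i hi
      simp only [mem_Icc] at hi
      rw [← Finset.mul_sum]
      congr 1
      have hbij : ∑ j ∈ Icc i (m-1), u (j-i) * t (m-j)
          = ∑ l ∈ Icc 0 (m-1-i), u l * t (m-i-l) := by
        refine Finset.sum_nbij' (fun j => j - i) (fun l => l + i) ?_ ?_ ?_ ?_ ?_
        · intro j hj; simp only [mem_Icc] at hj ⊢; omega
        · intro l hl; simp only [mem_Icc] at hl ⊢; omega
        · intro j hj; simp only [mem_Icc] at hj; omega
        · intro l hl; simp only [mem_Icc] at hl; omega
        · intro j hj; simp only [mem_Icc] at hj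
          have h1 : m - i - (j - i) = m - j := by omega
          rw [h1]
      rw [hbij]
      have h0 : Icc 0 (m-1-i) = insert 0 (Icc 1 (m-1-i)) := by
        ext l; simp only [mem_Icc, mem_insert]; omega
      have e2 : m - 1 - i = m - i - 1 := by omega
      rw [h0, Finset.sum_insert (by simp), hu0, one_mul, Nat.sub_zero, e2,
        ← hu (m-i) (by omega)]
    rw [Finset.sum_congr rfl step2]
    have hIcc : Icc 1 m = insert m (Icc 1 (m-1)) := by
      ext i; simp only [mem_Icc, mem_insert]; omega
    rw [hIcc, Finset.sum_insert (by simp only [mem_Icc]; omega), Nat.sub_self, hu0, mul_one,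
      add_comm]

lemma eabs_zero_right (a : ℝ≥0∞) : eabs a 0 = a := by simp [eabs]

lemma eabs_zero_left (a : ℝ≥0∞) : eabs 0 a = a := by simp [eabs]

lemma eabs_add_le (a b c d : ℝ≥0∞) : eabs (a + b) (c + d) ≤ eabs a c + eabs b d := by
  unfold eabs
  apply max_le
  · exact le_trans add_tsub_add_le_tsub_add_tsub
      (add_le_add (le_max_left _ _) (le_max_left _ _))
  · exact le_trans add_tsub_add_le_tsub_add_tsub
      (add_le_add (le_max_right _ _) (le_max_right _ _))

lemma eabs_mul_right_le (a b t : ℝ≥0∞) : eabs (a * t) (b * t) ≤ eabs a b * t := by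
  unfold eabs
  apply max_le
  · rw [tsub_le_iff_right]
    calc a * t ≤ ((a - b) + b) * t := mul_le_mul_left le_tsub_add t
    _ ≤ (max (a-b) (b-a) + b) * t := by
        exact mul_le_mul_left (add_le_add_left (le_max_left _ _) b) t
    _ = max (a-b) (b-a) * t + b * t := by ring
  · rw [tsub_le_iff_right]
    calc b * t ≤ ((b - a) + a) * t := mul_le_mul_left le_tsub_add t
    _ ≤ (max (a-b) (b-a) + a) * t := by
        exact mul_le_mul_left (add_le_add_left (le_max_right _ _) a) t
    _ = max (a-b) (b-a) * t + a * t := by ring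

lemma eabs_sum_le {ι : Type*} (s : Finset ι) (f g : ι → ℝ≥0∞) :
    eabs (∑ i ∈ s, f i) (∑ i ∈ s, g i) ≤ ∑ i ∈ s, eabs (f i) (g i) := by
  classical
  induction s using Finset.induction_on with
  | empty => simp [eabs]
  | insert _ _ h ih =>
    rw [Finset.sum_insert h, Finset.sum_insert h, Finset.sum_insert h]
    exact le_trans (eabs_add_le _ _ _ _) (add_le_add_right ih _)

lemma eabs_final (A B C D pa : ℝ≥0∞) (f h : ℕ → ℝ≥0∞) (n : ℕ)
    (hA : A = C + ∑ m ∈ range n, f m * h m)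
    (hB : B = (∑ m ∈ range n, pa * h m) + D) :
    eabs A B ≤ C + (∑ m ∈ range n, eabs (f m) pa * h m) + D := by
  subst hA hB
  calc eabs (C + ∑ m ∈ range n, f m * h m) ((∑ m ∈ range n, pa * h m) + D)
      = eabs ((C + ∑ m ∈ range n, f m * h m) + 0)
          ((0 + ∑ m ∈ range n, pa * h m) + D) := by rw [add_zero, zero_add]
    _ ≤ eabs (C + ∑ m ∈ range n, f m * h m) (0 + ∑ m ∈ range n, pa * h m)
          + eabs 0 D := eabs_add_le _ _ _ _
    _ ≤ (eabs C 0 + eabs (∑ m ∈ range n, f m * h m) (∑ m ∈ range n, pa * h m))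
          + eabs 0 D := add_le_add_left (eabs_add_le _ _ _ _) _
    _ = C + eabs (∑ m ∈ range n, f m * h m) (∑ m ∈ range n, pa * h m) + D := by
          rw [eabs_zero_left, eabs_zero_right]
    _ ≤ C + (∑ m ∈ range n, eabs (f m * h m) (pa * h m)) + D := by
          gcongr
          exact eabs_sum_le _ _ _
    _ ≤ C + (∑ m ∈ range n, eabs (f m) pa * h m) + D := by
          gcongr with m hm
          exact eabs_mul_right_le _ _ _

end RegenAux

theorem regenerative_bound_on_deviation_from_equilibrium
    {X : Type*} [MeasurableSpace X] (P : Kernel X X) [IsMarkovKernel P]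
    {α : Set X} (hα : MeasurableSet α)
    (hatom : ∃ ν : Measure X, ∀ x ∈ α, P x = ν)
    (x₀ : X) (hx₀ : x₀ ∈ α)
    (π : Measure X) [IsProbabilityMeasure π] (hπinv : Kernel.Invariant P π)
    (hπα : 0 < π α)
    (g : X → ℝ≥0∞) (hg : Measurable g) (hgπ : ∫⁻ y, g y ∂π < ∞)
    -- the representation `π(g) = π(α) Σ_{k=1}^∞ t_g(k)`
    (hrep : ∫⁻ y, g y ∂π
      = π α * ∑' k : ℕ, ∫⁻ y, g y ∂(tabooKernel P hα (k + 1) x₀)) :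
    ∀ x : X, ∀ n : ℕ, 1 ≤ n →
      eabs (∫⁻ y, g y ∂(nstep P n x)) (∫⁻ y, g y ∂π)
        ≤ (∫⁻ y, g y ∂(tabooKernel P hα n x))
          + (∑ m ∈ Finset.range n,
              eabs (∑ i ∈ Finset.Icc 1 m, tabooKernel P hα i x α * nstep P (m - i) x₀ α)
                  (π α)
                * ∫⁻ y, g y ∂(tabooKernel P hα (n - m) x₀))
          + π α * ∑' k : ℕ, ∫⁻ y, g y ∂(tabooKernel P hα (n + 1 + k) x₀) := by
  obtain ⟨ν, hν⟩ := hatom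
  have hat : ∀ y ∈ α, P y = P x₀ := fun y hy => by rw [hν y hy, hν x₀ hx₀]
  intro x n hn
  -- last-exit decomposition of the lintegral
  have hdec : ∫⁻ y, g y ∂(nstep P n x)
      = (∫⁻ y, g y ∂(tabooKernel P hα n x))
        + ∑ m ∈ Finset.Icc 1 (n-1),
            (nstep P m x α) * ∫⁻ y, g y ∂(tabooKernel P hα (n-m) x₀) := by
    rw [RegenAux.main_decomp P hα x₀ hx₀ hat n hn x, lintegral_add_measure,
      lintegral_finset_sum_measure]
    simp only [lintegral_smul_measure, smul_eq_mul]
  -- renewal recursions at a set α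
  have hrec : ∀ z : X, ∀ k, 1 ≤ k → nstep P k z α
      = tabooKernel P hα k z α
        + ∑ j ∈ Finset.Icc 1 (k-1), nstep P j z α * tabooKernel P hα (k-j) x₀ α := by
    intro z k hk
    rw [RegenAux.main_decomp P hα x₀ hx₀ hat k hk z]
    simp [Measure.finset_sum_apply]
  have hu0 : nstep P 0 x₀ α = 1 := by
    show Kernel.id x₀ α = 1
    rw [Kernel.id_apply, Measure.dirac_apply' _ hα, Set.indicator_of_mem hx₀]
    rfl
  -- first-entrance decomposition via renewal-equation uniqueness
  have hconv : ∀ m, 1 ≤ m → nstep P m x α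
      = ∑ i ∈ Finset.Icc 1 m, tabooKernel P hα i x α * nstep P (m-i) x₀ α :=
    RegenAux.conv_unique (fun i => tabooKernel P hα i x α)
      (fun i => tabooKernel P hα i x₀ α)
      (fun k => nstep P k x₀ α) (fun m => nstep P m x α) hu0
      (fun k hk => hrec x₀ k hk) (fun m hm => hrec x m hm)
  have hr : Finset.range n = insert 0 (Finset.Icc 1 (n-1)) := by
    ext m; simp only [Finset.mem_range, Finset.mem_Icc, Finset.mem_insert]; omega
  have hA : ∫⁻ y, g y ∂(nstep P n x)
      = (∫⁻ y, g y ∂(tabooKernel P hα n x))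
        + ∑ m ∈ Finset.range n,
            (∑ i ∈ Finset.Icc 1 m, tabooKernel P hα i x α * nstep P (m-i) x₀ α)
              * ∫⁻ y, g y ∂(tabooKernel P hα (n-m) x₀) := by
    rw [hdec, hr, Finset.sum_insert (by simp)]
    have h0 : Finset.Icc 1 0 = (∅ : Finset ℕ) := by simp
    rw [h0, Finset.sum_empty, zero_mul, zero_add]
    congr 1
    refine Finset.sum_congr rfl fun m hm => ?_
    simp only [Finset.mem_Icc] at hm
    rw [hconv m hm.1]
  have hB : ∫⁻ y, g y ∂π
      = (∑ m ∈ Finset.range n, π α * ∫⁻ y, g y ∂(tabooKernel P hα (n-m) x₀))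
        + π α * ∑' k, ∫⁻ y, g y ∂(tabooKernel P hα (n+1+k) x₀) := by
    rw [hrep]
    have hsplit := Summable.sum_add_tsum_nat_add'
      (f := fun k => ∫⁻ y, g y ∂(tabooKernel P hα (k+1) x₀)) (k := n) ENNReal.summable
    rw [← hsplit, mul_add, Finset.mul_sum]
    congr 1
    · rw [show (∑ m ∈ Finset.range n, π α * ∫⁻ y, g y ∂(tabooKernel P hα (n-m) x₀))
          = ∑ m ∈ Finset.range n,
              π α * ∫⁻ y, g y ∂(tabooKernel P hα ((n-1-m)+1) x₀) from
        Finset.sum_congr rfl fun m hm => by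
          simp only [Finset.mem_range] at hm
          rw [show n - m = (n-1-m)+1 by omega]]
      exact (Finset.sum_range_reflect
        (fun j => π α * ∫⁻ y, g y ∂(tabooKernel P hα (j+1) x₀)) n).symm
    · congr 1
      exact tsum_congr fun k => by rw [show k + n + 1 = n + 1 + k by omega]
  exact RegenAux.eabs_final _ _ _ _ (π α)
    (fun m => ∑ i ∈ Finset.Icc 1 m, tabooKernel P hα i x α * nstep P (m-i) x₀ α)
    (fun m => ∫⁻ y, g y ∂(tabooKernel P hα (n-m) x₀)) n hA hB
end
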